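/- arXiv:1703.01323 — 5 statements merged into one kernel-verified Lean document; each statement's English description precedes it below -/
import Mathlib

section
/- Let N be a positive integer, let n : Fin N → ℤ, let M_inf : Matrix (Fin N) (Fin N) ℝ, and let M : ℝ → Matrix (Fin N) (Fin N) ℝ satisfy: for every column index j and every row index i, the function c ↦ M c i j − c^(n j) * (M_inf i j) is O(c^(n j − 1)) as c → ∞. If M_inf is invertible (equivalently det M_inf ≠ 0), then there exists c₀ ∈ ℝ such that for all c ≥ c₀ the matrix M c is invertible. -/
open Filter Asymptotics

/-- If each column `j` of the matrix family `M c` satisfies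
`M c i j = c ^ (n j) * M_inf i j + O(c ^ (n j - 1))` as `c → ∞` and `M_inf` is invertible,
then `M c` is invertible for all sufficiently large `c`. -/
theorem eventually_invertible
    (N : ℕ) (hN : 0 < N) (n : Fin N → ℤ)
    (M_inf : Matrix (Fin N) (Fin N) ℝ)
    (M : ℝ → Matrix (Fin N) (Fin N) ℝ)
    (h : ∀ j i : Fin N,
      (fun c : ℝ => M c i j - c ^ (n j) * M_inf i j)
        =O[atTop] fun c : ℝ => c ^ (n j - 1))
    (hinv : IsUnit M_inf) :
    ∃ c₀ : ℝ, ∀ c ≥ c₀, IsUnit (M c) := by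
  set A : ℝ → Matrix (Fin N) (Fin N) ℝ := fun c i j => M c i j * c ^ (-n j) with hA
  have hO : ∀ i j : Fin N,
      (fun c : ℝ => A c i j - M_inf i j) =O[atTop] fun c : ℝ => c ^ (-1 : ℤ) := by
    intro i j
    have h1 : (fun c : ℝ => (M c i j - c ^ (n j) * M_inf i j) * c ^ (-n j))
        =O[atTop] fun c : ℝ => c ^ (n j - 1) * c ^ (-n j) :=
      (h j i).mul (isBigO_refl _ _)
    have h2 : (fun c : ℝ => A c i j - M_inf i j) =ᶠ[atTop]
        fun c : ℝ => (M c i j - c ^ (n j) * M_inf i j) * c ^ (-n j) := by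
      filter_upwards [eventually_gt_atTop (0 : ℝ)] with c hc
      have hc0 : c ≠ 0 := ne_of_gt hc
      field_simp [hA, zpow_ne_zero, hc0]
      simp only [hA]
      rw [sub_mul, mul_assoc, ← zpow_add₀ hc0, add_neg_cancel, zpow_zero, mul_one]
    have h3 : (fun c : ℝ => c ^ (n j - 1) * c ^ (-n j)) =ᶠ[atTop]
        fun c : ℝ => c ^ (-1 : ℤ) := by
      filter_upwards [eventually_gt_atTop (0 : ℝ)] with c hc
      rw [← zpow_add₀ (ne_of_gt hc)]
      ring_nf
    exact (h2.trans_isBigO h1).trans_eventuallyEq h3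
  have hlim : ∀ i j : Fin N, Tendsto (fun c => A c i j) atTop (nhds (M_inf i j)) := by
    intro i j
    have := (hO i j).trans_tendsto (tendsto_zpow_atTop_zero (by norm_num))
    have := this.add_const (M_inf i j)
    simpa using this
  have hAlim : Tendsto A atTop (nhds M_inf) := by
    apply tendsto_pi_nhds.2
    intro i
    apply tendsto_pi_nhds.2
    intro j
    exact hlim i j
  have hdet : Tendsto (fun c => (A c).det) atTop (nhds M_inf.det) :=
    (Continuous.matrix_det continuous_id).continuousAt.tendsto.comp hAlim
  have hdne : M_inf.det ≠ 0 := ((Matrix.isUnit_iff_isUnit_det _).1 hinv).ne_zero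
  have hev : ∀ᶠ c in atTop, (A c).det ≠ 0 ∧ (0:ℝ) < c :=
    (hdet.eventually_ne hdne).and (eventually_gt_atTop 0)
  obtain ⟨c₀, hc₀⟩ := eventually_atTop.1 hev
  refine ⟨c₀, fun c hc => ?_⟩
  obtain ⟨hdA, hcpos⟩ := hc₀ c hc
  have hc0 : c ≠ 0 := ne_of_gt hcpos
  have hMeq : M c = A c * Matrix.diagonal (fun j => c ^ (n j)) := by
    ext i j
    rw [Matrix.mul_diagonal]
    simp only [hA]
    rw [mul_assoc, ← zpow_add₀ hc0]
    simp
  rw [Matrix.isUnit_iff_isUnit_det, hMeq, Matrix.det_mul, Matrix.det_diagonal]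
  exact (isUnit_iff_ne_zero.2 hdA).mul
    (isUnit_iff_ne_zero.2 (Finset.prod_ne_zero_iff.2 fun j _ => zpow_ne_zero _ hc0))
end

section
/- Let N be a positive integer, let n : Fin N → ℤ, m ∈ ℤ, let M_inf : Matrix (Fin N) (Fin N) ℝ be invertible, and let M : ℝ → Matrix (Fin N) (Fin N) ℝ satisfy: for every column index j and every row index i, the function c ↦ M c i j − c^(n j) * (M_inf i j) is O(c^(n j − 1)) as c → ∞. Let b_inf : Fin N → ℝ and b : ℝ → (Fin N → ℝ) satisfy, for each index i, that c ↦ b c i − c^m * (b_inf i) is O(c^(m − 1)) as c → ∞. Let x_inf := M_inf⁻¹ • b_inf, and for those c with M c invertible let x c := (M c)⁻¹ • (b c). Then for each index j, the function c ↦ x c j − c^(m − n j) * (x_inf j) is O(c^(m − n j − 1)) as c → ∞ (this is well defined since M c is invertible for all sufficiently large c). -/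
open Filter Asymptotics Matrix

private lemma zpow_isBigO_zpow {k l : ℤ} (h : k ≤ l) :
    (fun c : ℝ => c ^ k) =O[atTop] fun c : ℝ => c ^ l := by
  apply IsBigO.of_bound 1
  filter_upwards [eventually_ge_atTop (1:ℝ)] with c hc
  have hc0 : (0:ℝ) < c := lt_of_lt_of_le one_pos hc
  simp only [Real.norm_eq_abs]
  rw [abs_of_pos (zpow_pos hc0 k), abs_of_pos (zpow_pos hc0 l), one_mul]
  exact zpow_le_zpow_right₀ hc h

private lemma zpow_mul_zpow_isBigO {k l r : ℤ} (h : k + l ≤ r) :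
    (fun c : ℝ => c ^ k * c ^ l) =O[atTop] fun c : ℝ => c ^ r := by
  have : (fun c : ℝ => c ^ k * c ^ l) =ᶠ[atTop] fun c : ℝ => c ^ (k + l) := by
    filter_upwards [eventually_gt_atTop (0:ℝ)] with c hc
    rw [← zpow_add₀ (ne_of_gt hc)]
  exact (zpow_isBigO_zpow h).congr' this.symm EventuallyEq.rfl

/-- Asymptotics of solutions of the linear systems `M c • x c = b c`: if
`M c i j = c ^ (n j) * M_inf i j + O(c ^ (n j - 1))` columnwise, `M_inf` is invertible and
`b c i = c ^ m * b_inf i + O(c ^ (m - 1))`, then for each `j` the solution satisfies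
`x c j = c ^ (m - n j) * x_inf j + O(c ^ (m - n j - 1))` as `c → ∞`,
where `x_inf = M_inf⁻¹ • b_inf` and `x c = (M c)⁻¹ • b c`. -/
theorem solution_asymptotic
    (N : ℕ) (hN : 0 < N) (n : Fin N → ℤ) (m : ℤ)
    (M_inf : Matrix (Fin N) (Fin N) ℝ)
    (M : ℝ → Matrix (Fin N) (Fin N) ℝ)
    (hM : ∀ j i : Fin N,
      (fun c : ℝ => M c i j - c ^ (n j) * M_inf i j)
        =O[atTop] fun c : ℝ => c ^ (n j - 1))
    (hinv : IsUnit M_inf)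
    (b_inf : Fin N → ℝ) (b : ℝ → Fin N → ℝ)
    (hb : ∀ i : Fin N,
      (fun c : ℝ => b c i - c ^ m * b_inf i) =O[atTop] fun c : ℝ => c ^ (m - 1)) :
    ∀ j : Fin N,
      (fun c : ℝ => ((M c)⁻¹ *ᵥ b c) j - c ^ (m - n j) * (M_inf⁻¹ *ᵥ b_inf) j)
        =O[atTop] fun c : ℝ => c ^ (m - n j - 1) := by
  set G : ℝ → Matrix (Fin N) (Fin N) ℝ := fun c => Matrix.of fun i j => c ^ (-(n j)) * M c i j
    with hGdef
  have hG_apply : ∀ c i j, G c i j = c ^ (-(n j)) * M c i j := fun _ _ _ => rfl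
  have hpos : ∀ᶠ c : ℝ in atTop, (1:ℝ) ≤ c := eventually_ge_atTop 1
  -- each entry of `G` is `M_inf` entry plus `O(c⁻¹)`
  have hS : ∀ i j : Fin N,
      (fun c : ℝ => G c i j - M_inf i j) =O[atTop] fun c : ℝ => c ^ (-1 : ℤ) := by
    intro i j
    have h1 : (fun c : ℝ => c ^ (-(n j)) * (M c i j - c ^ (n j) * M_inf i j))
        =O[atTop] fun c : ℝ => c ^ (-1 : ℤ) :=
      ((isBigO_refl (fun c : ℝ => c ^ (-(n j))) atTop).mul (hM j i)).trans
        (zpow_mul_zpow_isBigO (by omega))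
    refine h1.congr' ?_ EventuallyEq.rfl
    filter_upwards [hpos] with c hc
    have hc0 : c ≠ 0 := ne_of_gt (lt_of_lt_of_le one_pos hc)
    have : c ^ (-(n j)) * (c ^ (n j) * M_inf i j) = M_inf i j := by
      rw [← mul_assoc, ← zpow_add₀ hc0]
      simp
    rw [mul_sub, this, hG_apply]
  -- `G c → M_inf`
  have htend : Tendsto G atTop (nhds M_inf) := by
    rw [show M_inf = Matrix.of fun i j => M_inf i j from rfl]
    refine tendsto_pi_nhds.2 fun i => tendsto_pi_nhds.2 fun j => ?_
    have : Tendsto (fun c => G c i j - M_inf i j) atTop (nhds 0) :=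
      (hS i j).trans_tendsto (tendsto_zpow_atTop_zero (by norm_num))
    simpa using this.add_const (M_inf i j)
  have hdet0 : M_inf.det ≠ 0 :=
    IsUnit.ne_zero ((Matrix.isUnit_iff_isUnit_det M_inf).1 hinv)
  have hdet_tend : Tendsto (fun c => (G c).det) atTop (nhds M_inf.det) :=
    (Continuous.matrix_det continuous_id).continuousAt.tendsto.comp htend
  have hGdet : ∀ᶠ c : ℝ in atTop, (G c).det ≠ 0 := hdet_tend.eventually_ne hdet0
  -- `(G c)⁻¹ → M_inf⁻¹`
  have hinv_tend : Tendsto (fun c => (G c)⁻¹) atTop (nhds M_inf⁻¹) := by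
    have hca : ContinuousAt Ring.inverse M_inf.det := by
      rw [show (Ring.inverse : ℝ → ℝ) = Inv.inv from funext fun x => Ring.inverse_eq_inv x]
      exact continuousAt_inv₀ hdet0
    exact (continuousAt_matrix_inv M_inf hca).tendsto.comp htend
  have hGinv_bound : ∀ p q : Fin N,
      (fun c => (G c)⁻¹ p q) =O[atTop] fun _ : ℝ => (1:ℝ) := by
    intro p q
    have h1 : Tendsto (fun c => (G c)⁻¹ p) atTop (nhds (M_inf⁻¹ p)) :=
      ((continuous_apply p).tendsto _).comp hinv_tend
    have h2 : Tendsto (fun c => (G c)⁻¹ p q) atTop (nhds (M_inf⁻¹ p q)) :=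
      ((continuous_apply q).tendsto _).comp h1
    exact h2.isBigO_one ℝ
  intro j
  -- entries of `(G c)⁻¹ - M_inf⁻¹` are `O(c⁻¹)`
  have hs : ∀ p : Fin N,
      (fun c => (G c)⁻¹ j p - M_inf⁻¹ j p) =O[atTop] fun c : ℝ => c ^ (-1 : ℤ) := by
    intro p
    have hid : (fun c => ((G c)⁻¹ * (M_inf - G c) * M_inf⁻¹) j p)
        =ᶠ[atTop] fun c => (G c)⁻¹ j p - M_inf⁻¹ j p := by
      filter_upwards [hGdet] with c hc
      have hGu : IsUnit (G c).det := isUnit_iff_ne_zero.2 hc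
      have h1 : (G c)⁻¹ * G c = 1 := Matrix.nonsing_inv_mul _ hGu
      have h2 : M_inf * M_inf⁻¹ = 1 :=
        Matrix.mul_nonsing_inv _ ((Matrix.isUnit_iff_isUnit_det M_inf).1 hinv)
      have h3 : (G c)⁻¹ * (M_inf - G c) * M_inf⁻¹ = (G c)⁻¹ - M_inf⁻¹ := by
        rw [Matrix.mul_sub, Matrix.sub_mul, Matrix.mul_assoc, h2, Matrix.mul_one, h1,
          Matrix.one_mul]
      rw [h3, Matrix.sub_apply]
    refine IsBigO.congr' ?_ hid EventuallyEq.rfl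
    have hrw : (fun c => ((G c)⁻¹ * (M_inf - G c) * M_inf⁻¹) j p)
        = fun c => ∑ r : Fin N, (∑ q : Fin N,
            (G c)⁻¹ j q * (M_inf q r - G c q r)) * M_inf⁻¹ r p := by
      funext c
      simp [Matrix.mul_apply, Matrix.sub_apply, Finset.sum_mul, mul_sub]
    rw [hrw]
    refine Asymptotics.IsBigO.fun_sum fun r _ => ?_
    have hsum : (fun c => ∑ q : Fin N, (G c)⁻¹ j q * (M_inf q r - G c q r))
        =O[atTop] fun c : ℝ => c ^ (-1 : ℤ) := by
      refine Asymptotics.IsBigO.fun_sum fun q _ => ?_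
      have := (hGinv_bound j q).mul (hS q r).neg_left
      simpa [neg_sub] using this
    simpa using hsum.mul (isBigO_const_const (M_inf⁻¹ r p) (one_ne_zero) atTop :
      (fun _ : ℝ => M_inf⁻¹ r p) =O[atTop] fun _ : ℝ => (1:ℝ))
  -- `b c k = O(c ^ m)`
  have hbO : ∀ k : Fin N, (fun c => b c k) =O[atTop] fun c : ℝ => c ^ m := by
    intro k
    have h1 : (fun c : ℝ => b c k - c ^ m * b_inf k) =O[atTop] fun c : ℝ => c ^ m :=
      (hb k).trans (zpow_isBigO_zpow (by omega))
    have h2 : (fun c : ℝ => c ^ m * b_inf k) =O[atTop] fun c : ℝ => c ^ m := by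
      simpa using (isBigO_refl (fun c : ℝ => c ^ m) atTop).mul
        (isBigO_const_const (b_inf k) one_ne_zero atTop)
    simpa using h1.add h2
  -- eventual identity
  have hx_eq : ∀ᶠ c : ℝ in atTop,
      ((M c)⁻¹ *ᵥ b c) j = c ^ (-(n j)) * (((G c)⁻¹ *ᵥ b c) j) := by
    filter_upwards [hpos, hGdet] with c hc hdc
    have hc0 : c ≠ 0 := ne_of_gt (lt_of_lt_of_le one_pos hc)
    have hMfac : M c = G c * Matrix.diagonal (fun k => c ^ (n k)) := by
      ext i k
      rw [Matrix.mul_diagonal, hG_apply, mul_comm (c ^ (-(n k))) (M c i k), mul_assoc,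
        ← zpow_add₀ hc0]
      simp
    have hD : (Matrix.diagonal fun k : Fin N => c ^ (n k))
        * (Matrix.diagonal fun k : Fin N => c ^ (-(n k))) = 1 := by
      have hone : (fun i : Fin N => c ^ (n i) * c ^ (-(n i))) = fun _ => (1:ℝ) := by
        funext i; rw [← zpow_add₀ hc0]; simp
      rw [Matrix.diagonal_mul_diagonal, hone, Matrix.diagonal_one]
    have hMinv : (M c)⁻¹ = (Matrix.diagonal fun k => c ^ (-(n k))) * (G c)⁻¹ := by
      apply Matrix.inv_eq_right_inv
      rw [hMfac, Matrix.mul_assoc, ← Matrix.mul_assoc (Matrix.diagonal _) (Matrix.diagonal _),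
        hD, Matrix.one_mul, Matrix.mul_nonsing_inv _ (isUnit_iff_ne_zero.2 hdc)]
    rw [hMinv, ← Matrix.mulVec_mulVec, Matrix.mulVec_diagonal]
  -- main estimate
  have hinner : (fun c => ((G c)⁻¹ *ᵥ b c) j - c ^ m * (M_inf⁻¹ *ᵥ b_inf) j)
      =O[atTop] fun c : ℝ => c ^ (m - 1) := by
    have hrw : (fun c => ((G c)⁻¹ *ᵥ b c) j - c ^ m * (M_inf⁻¹ *ᵥ b_inf) j)
        = fun c => ∑ k : Fin N, (((G c)⁻¹ j k - M_inf⁻¹ j k) * b c k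
            + M_inf⁻¹ j k * (b c k - c ^ m * b_inf k)) := by
      funext c
      simp only [Matrix.mulVec, dotProduct, Finset.mul_sum, ← Finset.sum_sub_distrib,
        ← Finset.sum_add_distrib]
      apply Finset.sum_congr rfl
      intro k _
      ring
    rw [hrw]
    refine Asymptotics.IsBigO.fun_sum fun k _ => ?_
    have h1 : (fun c => ((G c)⁻¹ j k - M_inf⁻¹ j k) * b c k)
        =O[atTop] fun c : ℝ => c ^ (m - 1) :=
      ((hs k).mul (hbO k)).trans (zpow_mul_zpow_isBigO (by omega))
    have h2 : (fun c => M_inf⁻¹ j k * (b c k - c ^ m * b_inf k))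
        =O[atTop] fun c : ℝ => c ^ (m - 1) := (hb k).const_mul_left _
    exact h1.add h2
  -- put things together
  have hmain : (fun c : ℝ => c ^ (-(n j)) * (((G c)⁻¹ *ᵥ b c) j - c ^ m * (M_inf⁻¹ *ᵥ b_inf) j))
      =O[atTop] fun c : ℝ => c ^ (m - n j - 1) :=
    ((isBigO_refl (fun c : ℝ => c ^ (-(n j))) atTop).mul hinner).trans
      (zpow_mul_zpow_isBigO (by omega))
  refine hmain.congr' ?_ EventuallyEq.rfl
  filter_upwards [hx_eq, hpos] with c hceq hc
  have hc0 : c ≠ 0 := ne_of_gt (lt_of_lt_of_le one_pos hc)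
  rw [mul_sub, ← hceq, ← mul_assoc, ← zpow_add₀ hc0]
  congr 2
  ring
end

section
/- Let n ≥ 2 be a natural number, m := 2n, λ > 0 a real number, and p ∈ ℝ. Then there exist c₀ ∈ ℝ and K > 0 such that for every c ≥ c₀ and every triple (A, B, f) with A, B ∈ ℝ and f : ℝ → ℝ twice continuously differentiable on an open interval containing [λ, 1+λ] satisfying x²·f''(x) − m·x·f'(x) + m·f(x) = −A·(p·(x−λ)+c)^(n−1) + B·x²·(p·(x−λ)+c)^(n−2) for all x ∈ [λ, 1+λ], together with the boundary conditions f(λ) = 0, f(1+λ) = 0, f'(λ) = 2·c^(n−1), f'(1+λ) = −2·(p+c)^(n−1), one has the uniform estimates |f(x+λ) − 2·c^(n−1)·x·(1−x)| ≤ K·c^(n−2) and |f'(x+λ) − 2·c^(n−1)·(1−2x)| ≤ K·c^(n−2) for all x ∈ [0,1]. -/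
open Set MeasureTheory intervalIntegral


lemma pow_diff_est (k : ℕ) (a b r : ℝ) (hb : 1 ≤ b) (hab : |a - b| ≤ r) (hrb : r ≤ b) :
    |a ^ k - b ^ k| ≤ r * (k * 2 ^ k) * b ^ k / b := by
  have hb0 : (0:ℝ) < b := lt_of_lt_of_le one_pos hb
  have hr0 : 0 ≤ r := le_trans (abs_nonneg _) hab
  rcases Nat.eq_zero_or_pos k with rfl | hk
  · simp
  have ha2 : |a| ≤ 2 * b := by
    have h1 : a = (a - b) + b := by ring
    calc |a| = |(a - b) + b| := by rw [← h1]
    _ ≤ |a - b| + |b| := abs_add_le _ _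
    _ ≤ r + b := by rw [abs_of_pos hb0]; linarith
    _ ≤ 2 * b := by linarith
  have key : a ^ k - b ^ k = (∑ i ∈ Finset.range k, a ^ i * b ^ (k - 1 - i)) * (a - b) :=
    (geom_sum₂_mul a b k).symm
  have hterm : ∀ i ∈ Finset.range k, |a ^ i * b ^ (k - 1 - i)| ≤ 2 ^ k * b ^ (k - 1) := by
    intro i hi
    have hik : i ≤ k - 1 := Nat.le_sub_one_of_lt (Finset.mem_range.mp hi)
    have : |a ^ i * b ^ (k - 1 - i)| = |a| ^ i * b ^ (k - 1 - i) := by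
      rw [abs_mul, abs_pow, abs_of_pos (pow_pos hb0 _)]
    rw [this]
    calc |a| ^ i * b ^ (k - 1 - i) ≤ (2 * b) ^ i * b ^ (k - 1 - i) := by
          apply mul_le_mul_of_nonneg_right (pow_le_pow_left₀ (abs_nonneg _) ha2 i)
            (le_of_lt (pow_pos hb0 _))
    _ = 2 ^ i * b ^ (i + (k - 1 - i)) := by rw [mul_pow, pow_add]; ring
    _ = 2 ^ i * b ^ (k - 1) := by rw [Nat.add_sub_cancel' hik]
    _ ≤ 2 ^ k * b ^ (k - 1) := by
          apply mul_le_mul_of_nonneg_right _ (le_of_lt (pow_pos hb0 _))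
          exact pow_le_pow_right₀ one_le_two (le_of_lt (Finset.mem_range.mp hi))
  have hsum : |∑ i ∈ Finset.range k, a ^ i * b ^ (k - 1 - i)| ≤ k * 2 ^ k * b ^ (k - 1) := by
    calc |∑ i ∈ Finset.range k, a ^ i * b ^ (k - 1 - i)|
        ≤ ∑ i ∈ Finset.range k, |a ^ i * b ^ (k - 1 - i)| := Finset.abs_sum_le_sum_abs _ _
    _ ≤ ∑ _i ∈ Finset.range k, 2 ^ k * b ^ (k - 1) := Finset.sum_le_sum hterm
    _ = k * 2 ^ k * b ^ (k - 1) := by rw [Finset.sum_const, Finset.card_range]; push_cast; ring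
  have hbk : b ^ (k - 1) = b ^ k / b := by
    rw [eq_div_iff (ne_of_gt hb0), ← pow_succ, Nat.sub_add_cancel hk]
  rw [key, abs_mul]
  calc |∑ i ∈ Finset.range k, a ^ i * b ^ (k - 1 - i)| * |a - b|
      ≤ (k * 2 ^ k * b ^ (k - 1)) * r := by
        apply mul_le_mul hsum hab (abs_nonneg _)
        positivity
  _ = r * (k * 2 ^ k) * b ^ k / b := by rw [hbk]; ring


-- previous lemmas assumed (tested separately); minimal re-statements here
lemma contOn_inv_pow (k : ℕ) : ContinuousOn (fun t : ℝ => 1 / t ^ k) (Ioi (0:ℝ)) :=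
  ContinuousOn.div continuousOn_const (continuous_pow k).continuousOn
    (fun t ht => pow_ne_zero k (ne_of_gt ht))

lemma uIcc_subset_Ioi {lam x : ℝ} (hlam : 0 < lam) (hx : 0 < x) :
    Set.uIcc lam x ⊆ Ioi (0:ℝ) := by
  intro t ht
  rcases Set.mem_uIcc.mp ht with h | h
  · exact lt_of_lt_of_le hlam h.1
  · exact lt_of_lt_of_le hx h.1

lemma hasDerivAt_primitive {q : ℝ → ℝ} {lam x : ℝ} (hlam : 0 < lam) (hx : 0 < x)
    (hq : ContinuousOn q (Ioi (0:ℝ))) :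
    HasDerivAt (fun u => ∫ t in lam..u, q t) (q x) x := by
  apply intervalIntegral.integral_hasDerivAt_right
  · exact (hq.mono (uIcc_subset_Ioi hlam hx)).intervalIntegrable
  · exact hq.stronglyMeasurableAtFilter isOpen_Ioi x hx
  · exact hq.continuousAt (Ioi_mem_nhds hx)

lemma contOn_primitive {q : ℝ → ℝ} {lam : ℝ} (hlam : 0 < lam)
    (hq : ContinuousOn q (Ioi (0:ℝ))) :
    ContinuousOn (fun u => ∫ t in lam..u, q t) (Ioi (0:ℝ)) :=
  fun x hx => (hasDerivAt_primitive hlam hx hq).continuousAt.continuousWithinAt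

noncomputable def gI (j : ℕ) (lam x : ℝ) : ℝ := ∫ t in lam..x, 1 / t ^ (2*j+5)
noncomputable def hI (j : ℕ) (lam x : ℝ) : ℝ := ∫ t in lam..x, 1 / t ^ (2*j+3)

lemma gI_hasDeriv (j : ℕ) {lam x : ℝ} (hlam : 0 < lam) (hx : 0 < x) :
    HasDerivAt (gI j lam) (1 / x ^ (2*j+5)) x :=
  hasDerivAt_primitive hlam hx (contOn_inv_pow _)

lemma hI_hasDeriv (j : ℕ) {lam x : ℝ} (hlam : 0 < lam) (hx : 0 < x) :
    HasDerivAt (hI j lam) (1 / x ^ (2*j+3)) x :=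
  hasDerivAt_primitive hlam hx (contOn_inv_pow _)

lemma gI_pos (j : ℕ) {lam x : ℝ} (hlam : 0 < lam) (hx : lam < x) : 0 < gI j lam x := by
  apply intervalIntegral.intervalIntegral_pos_of_pos_on
  · exact ((contOn_inv_pow _).mono (uIcc_subset_Ioi hlam (lt_trans hlam hx))).intervalIntegrable
  · intro t ht
    have : 0 < t := lt_trans hlam ht.1
    positivity
  · exact hx

lemma hI_pos (j : ℕ) {lam x : ℝ} (hlam : 0 < lam) (hx : lam < x) : 0 < hI j lam x := by
  apply intervalIntegral.intervalIntegral_pos_of_pos_on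
  · exact ((contOn_inv_pow _).mono (uIcc_subset_Ioi hlam (lt_trans hlam hx))).intervalIntegrable
  · intro t ht
    have : 0 < t := lt_trans hlam ht.1
    positivity
  · exact hx

-- NEW PART
lemma psi_pos_at_lam (j : ℕ) {lam : ℝ} (hlam : 0 < lam) :
    lam ^ 2 * gI j lam (1+lam) < hI j lam (1+lam) := by
  have hX : lam < 1 + lam := by linarith
  have hint1 : IntervalIntegrable (fun t : ℝ => lam^2 * (1/t^(2*j+5))) volume lam (1+lam) :=
    ((continuousOn_const.mul (contOn_inv_pow (2*j+5))).mono
      (uIcc_subset_Ioi hlam (by linarith))).intervalIntegrable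
  have hint2 : IntervalIntegrable (fun t : ℝ => 1/t^(2*j+3)) volume lam (1+lam) :=
    ((contOn_inv_pow (2*j+3)).mono (uIcc_subset_Ioi hlam (by linarith))).intervalIntegrable
  have hpos := intervalIntegral.intervalIntegral_pos_of_pos_on
    (f := fun t : ℝ => 1/t^(2*j+3) - lam^2 * (1/t^(2*j+5))) (hint2.sub hint1) ?_ hX
  · rw [intervalIntegral.integral_sub hint2 hint1] at hpos
    have h1 : (∫ t in lam..(1+lam), lam^2 * (1/t^(2*j+5))) = lam^2 * gI j lam (1+lam) := by
      rw [gI, intervalIntegral.integral_const_mul]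
    rw [h1] at hpos
    rw [hI]; linarith
  · intro t ht
    have ht0 : 0 < t := lt_trans hlam ht.1
    have h1 : lam^2 * (1/t^(2*j+5)) < 1/t^(2*j+3) := by
      rw [mul_one_div, div_lt_div_iff₀ (by positivity) (by positivity)]
      have h2 : lam^2 < t^2 := by nlinarith [ht.1]
      have h3 : (0:ℝ) < t^(2*j+3) := by positivity
      calc lam^2 * t^(2*j+3) < t^2 * t^(2*j+3) := by nlinarith
      _ = 1 * t^(2*j+5) := by ring
    linarith

lemma psi_neg_at_X (j : ℕ) {lam : ℝ} (hlam : 0 < lam) :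
    hI j lam (1+lam) < (1+lam) ^ 2 * gI j lam (1+lam) := by
  have hX : lam < 1 + lam := by linarith
  have hint1 : IntervalIntegrable (fun t : ℝ => (1+lam)^2 * (1/t^(2*j+5))) volume lam (1+lam) :=
    ((continuousOn_const.mul (contOn_inv_pow (2*j+5))).mono
      (uIcc_subset_Ioi hlam (by linarith))).intervalIntegrable
  have hint2 : IntervalIntegrable (fun t : ℝ => 1/t^(2*j+3)) volume lam (1+lam) :=
    ((contOn_inv_pow (2*j+3)).mono (uIcc_subset_Ioi hlam (by linarith))).intervalIntegrable
  have hpos := intervalIntegral.intervalIntegral_pos_of_pos_on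
    (f := fun t : ℝ => (1+lam)^2 * (1/t^(2*j+5)) - 1/t^(2*j+3)) (hint1.sub hint2) ?_ hX
  · rw [intervalIntegral.integral_sub hint1 hint2] at hpos
    have h1 : (∫ t in lam..(1+lam), (1+lam)^2 * (1/t^(2*j+5))) = (1+lam)^2 * gI j lam (1+lam) := by
      rw [gI, intervalIntegral.integral_const_mul]
    rw [h1] at hpos
    rw [hI]; linarith
  · intro t ht
    have ht0 : 0 < t := lt_trans hlam ht.1
    have h1 : 1/t^(2*j+3) < (1+lam)^2 * (1/t^(2*j+5)) := by
      rw [mul_one_div, div_lt_div_iff₀ (by positivity) (by positivity)]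
      have h2 : t^2 < (1+lam)^2 := by nlinarith [ht.2]
      have h3 : (0:ℝ) < t^(2*j+3) := by positivity
      calc (1:ℝ) * t^(2*j+5) = t^2 * t^(2*j+3) := by ring
      _ < (1+lam)^2 * t^(2*j+3) := by nlinarith
    linarith

noncomputable def phiF (j : ℕ) (lam s : ℝ) : ℝ :=
  gI j lam s * hI j lam (1+lam) - hI j lam s * gI j lam (1+lam)

lemma phiF_hasDeriv (j : ℕ) {lam s : ℝ} (hlam : 0 < lam) (hs : 0 < s) :
    HasDerivAt (phiF j lam)
      ((1/s^(2*j+5)) * hI j lam (1+lam) - (1/s^(2*j+3)) * gI j lam (1+lam)) s :=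
  ((gI_hasDeriv j hlam hs).mul_const _).sub ((hI_hasDeriv j hlam hs).mul_const _)

lemma phiF_contOn (j : ℕ) {lam : ℝ} (hlam : 0 < lam) {s₁ s₂ : ℝ} (h1 : 0 < s₁) :
    ContinuousOn (phiF j lam) (Icc s₁ s₂) := by
  intro s hs
  exact (phiF_hasDeriv j hlam (lt_of_lt_of_le h1 hs.1)).continuousAt.continuousWithinAt

lemma phiF_pos (j : ℕ) {lam : ℝ} (hlam : 0 < lam) {t : ℝ} (ht : t ∈ Ioo lam (1+lam)) :
    0 < phiF j lam t := by
  have hX : lam < 1 + lam := by linarith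
  have hgX : 0 < gI j lam (1+lam) := gI_pos j hlam hX
  have hhX : 0 < hI j lam (1+lam) := hI_pos j hlam hX
  set gX := gI j lam (1+lam)
  set hX' := hI j lam (1+lam)
  -- ψ s = hX' - s^2 * gX ; derivative of phiF at s has sign of ψ s
  have hderiv_sign : ∀ s : ℝ, 0 < s →
      ((1/s^(2*j+5)) * hX' - (1/s^(2*j+3)) * gX) = (hX' - s^2 * gX) / s^(2*j+5) := by
    intro s hs
    field_simp
    ring
  have hphilam : phiF j lam lam = 0 := by
    simp [phiF, gI, hI]
  have hphiX : phiF j lam (1+lam) = 0 := by simp [phiF]; ring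
  rcases le_or_gt 0 (hX' - t^2 * gX) with hcase | hcase
  · -- strict mono on [lam, t]
    have hmono : StrictMonoOn (phiF j lam) (Icc lam t) := by
      apply strictMonoOn_of_deriv_pos (convex_Icc _ _) (phiF_contOn j hlam hlam)
      intro s hs
      rw [interior_Icc] at hs
      have hs0 : 0 < s := lt_trans hlam hs.1
      rw [(phiF_hasDeriv j hlam hs0).deriv, hderiv_sign s hs0]
      have hst : s^2 < t^2 := by nlinarith [hs.2, ht.1]
      have : 0 < hX' - s^2 * gX := by nlinarith
      positivity
    have := hmono (left_mem_Icc.mpr (le_of_lt ht.1)) (right_mem_Icc.mpr (le_of_lt ht.1)) ht.1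
    rwa [hphilam] at this
  · -- strict anti on [t, 1+lam]
    have hanti : StrictAntiOn (phiF j lam) (Icc t (1+lam)) := by
      apply strictAntiOn_of_deriv_neg (convex_Icc _ _)
        (phiF_contOn j hlam (lt_trans hlam ht.1))
      intro s hs
      rw [interior_Icc] at hs
      have hs0 : 0 < s := lt_trans (lt_trans hlam ht.1) hs.1
      rw [(phiF_hasDeriv j hlam hs0).deriv, hderiv_sign s hs0]
      have hst : t^2 < s^2 := by nlinarith [hs.1, ht.1]
      have hnum : hX' - s^2 * gX < 0 := by nlinarith
      apply div_neg_of_neg_of_pos hnum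
      positivity
    have := hanti (left_mem_Icc.mpr (le_of_lt ht.2)) (right_mem_Icc.mpr (le_of_lt ht.2)) ht.2
    rwa [hphiX] at this

noncomputable def GhI (j : ℕ) (lam : ℝ) : ℝ := ∫ t in lam..(1+lam), t^(2*j+2) * gI j lam t
noncomputable def HhI (j : ℕ) (lam : ℝ) : ℝ := ∫ t in lam..(1+lam), t^(2*j+2) * hI j lam t

/-- the limiting determinant is positive -/
lemma delta0_pos (j : ℕ) {lam : ℝ} (hlam : 0 < lam) :
    0 < hI j lam (1+lam) * GhI j lam - gI j lam (1+lam) * HhI j lam := by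
  have hX : lam < 1 + lam := by linarith
  have hsub : Set.uIcc lam (1+lam) ⊆ Ioi (0:ℝ) := uIcc_subset_Ioi hlam (by linarith)
  have hgcont : ContinuousOn (gI j lam) (Set.uIcc lam (1+lam)) :=
    (contOn_primitive hlam (contOn_inv_pow _)).mono hsub
  have hhcont : ContinuousOn (hI j lam) (Set.uIcc lam (1+lam)) :=
    (contOn_primitive hlam (contOn_inv_pow _)).mono hsub
  have hpcont : ContinuousOn (fun t : ℝ => t^(2*j+2)) (Set.uIcc lam (1+lam)) :=
    (continuous_pow _).continuousOn
  have hint1 : IntervalIntegrable (fun t : ℝ => t^(2*j+2) * gI j lam t) volume lam (1+lam) :=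
    (hpcont.mul hgcont).intervalIntegrable
  have hint2 : IntervalIntegrable (fun t : ℝ => t^(2*j+2) * hI j lam t) volume lam (1+lam) :=
    (hpcont.mul hhcont).intervalIntegrable
  have key : hI j lam (1+lam) * GhI j lam - gI j lam (1+lam) * HhI j lam
      = ∫ t in lam..(1+lam), t^(2*j+2) * phiF j lam t := by
    rw [GhI, HhI, ← intervalIntegral.integral_const_mul, ← intervalIntegral.integral_const_mul,
      ← intervalIntegral.integral_sub (hint1.const_mul _) (hint2.const_mul _)]
    apply intervalIntegral.integral_congr
    intro t _
    simp only [phiF]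
    ring
  rw [key]
  apply intervalIntegral.intervalIntegral_pos_of_pos_on
  · apply ContinuousOn.intervalIntegrable
    apply hpcont.mul
    exact (hgcont.mul continuousOn_const).sub (hhcont.mul continuousOn_const)
  · intro t ht
    have ht0 : 0 < t := lt_trans hlam ht.1
    have := phiF_pos j hlam ht
    have hp : 0 < t^(2*j+2) := by positivity
    exact mul_pos hp this
  · exact hX


-- assume pow_diff_est available

def Pl (p lam c t : ℝ) : ℝ := p * (t - lam) + c

lemma Pl_diff {p lam c t : ℝ} (ht : t ∈ Icc lam (1+lam)) : |Pl p lam c t - c| ≤ |p| := by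
  have h1 : Pl p lam c t - c = p * (t - lam) := by simp [Pl]
  rw [h1, abs_mul]
  have h2 : |t - lam| ≤ 1 := by
    rw [abs_of_nonneg (by linarith [ht.1])]
    linarith [ht.2]
  nlinarith [abs_nonneg p]

lemma Pl_pow_diff {p lam c t : ℝ} (ht : t ∈ Icc lam (1+lam)) (hc : 1 + |p| ≤ c) (k : ℕ) :
    |Pl p lam c t ^ k - c ^ k| ≤ |p| * (k * 2 ^ k) * c ^ k / c :=
  pow_diff_est k _ c _ (by linarith [abs_nonneg p]) (Pl_diff ht) (by linarith [abs_nonneg p])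

lemma Pl_pow_abs {p lam c t : ℝ} (ht : t ∈ Icc lam (1+lam)) (hc : 1 + |p| ≤ c) (k : ℕ) :
    |Pl p lam c t ^ k| ≤ 2 ^ k * c ^ k := by
  have hc0 : (0:ℝ) < c := by linarith [abs_nonneg p]
  have h1 : |Pl p lam c t| ≤ 2 * c := by
    have := Pl_diff (p := p) (c := c) ht
    have h2 : |Pl p lam c t| ≤ |Pl p lam c t - c| + |c| := by
      calc |Pl p lam c t| = |(Pl p lam c t - c) + c| := by ring_nf
      _ ≤ |Pl p lam c t - c| + |c| := abs_add_le _ _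
    rw [abs_of_pos hc0] at h2
    linarith
  rw [abs_pow]
  calc |Pl p lam c t| ^ k ≤ (2*c) ^ k := pow_le_pow_left₀ (abs_nonneg _) h1 k
  _ = 2 ^ k * c ^ k := mul_pow _ _ _


-- continuity of P-power integrands
lemma contOn_Pl_div (p lam c : ℝ) (k l : ℕ) :
    ContinuousOn (fun t : ℝ => Pl p lam c t ^ k / t ^ l) (Ioi (0:ℝ)) := by
  apply ContinuousOn.div
  · exact ((continuous_const.mul (continuous_id.sub continuous_const)).add
      continuous_const).pow k |>.continuousOn
  · exact (continuous_pow l).continuousOn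
  · exact fun t ht => pow_ne_zero l (ne_of_gt ht)

noncomputable def G1 (j : ℕ) (lam p c x : ℝ) : ℝ :=
  ∫ t in lam..x, Pl p lam c t ^ (j+1) / t ^ (2*j+5)
noncomputable def G2 (j : ℕ) (lam p c x : ℝ) : ℝ :=
  ∫ t in lam..x, Pl p lam c t ^ j / t ^ (2*j+3)

lemma G1_hasDeriv (j : ℕ) {lam p c x : ℝ} (hlam : 0 < lam) (hx : 0 < x) :
    HasDerivAt (G1 j lam p c) (Pl p lam c x ^ (j+1) / x ^ (2*j+5)) x :=
  hasDerivAt_primitive hlam hx (contOn_Pl_div _ _ _ _ _)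
lemma G2_hasDeriv (j : ℕ) {lam p c x : ℝ} (hlam : 0 < lam) (hx : 0 < x) :
    HasDerivAt (G2 j lam p c) (Pl p lam c x ^ j / x ^ (2*j+3)) x :=
  hasDerivAt_primitive hlam hx (contOn_Pl_div _ _ _ _ _)

/-- main single-integral estimate: `|G1 x - c^k gI x| ≤ CP1 ⬝ c^k/c` -/
lemma Gk_est (k l : ℕ) {lam p c x : ℝ} (hlam : 0 < lam) (hx : x ∈ Icc lam (1+lam))
    (hc : 1 + |p| ≤ c) :
    |(∫ t in lam..x, Pl p lam c t ^ k / t ^ l) - c^k * (∫ t in lam..x, (1:ℝ)/t^l)|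
      ≤ (|p| * (k * 2^k) / lam^l) * (c^k/c) := by
  have hc0 : (0:ℝ) < c := by linarith [abs_nonneg p]
  have hx0 : 0 < x := lt_of_lt_of_le hlam hx.1
  have hsub : Set.uIcc lam x ⊆ Ioi (0:ℝ) := uIcc_subset_Ioi hlam hx0
  have hint1 : IntervalIntegrable (fun t : ℝ => Pl p lam c t ^ k / t ^ l)
      volume lam x := ((contOn_Pl_div p lam c _ _).mono hsub).intervalIntegrable
  have hint2 : IntervalIntegrable (fun t : ℝ => c^k * (1 / t ^ l))
      volume lam x :=
    ((continuousOn_const.mul ((contOn_inv_pow _).mono hsub)).intervalIntegrable)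
  have hrw : (∫ t in lam..x, Pl p lam c t ^ k / t ^ l) - c^k * (∫ t in lam..x, (1:ℝ)/t^l)
      = ∫ t in lam..x, (Pl p lam c t ^ k / t ^ l - c^k * (1 / t ^ l)) := by
    rw [intervalIntegral.integral_sub hint1 hint2, intervalIntegral.integral_const_mul]
  rw [hrw]
  have hbound : ∀ t ∈ Set.uIoc lam x,
      |Pl p lam c t ^ k / t ^ l - c^k * (1 / t ^ l)|
        ≤ (|p| * (k * 2^k) / lam^l) * (c^k/c) := by
    intro t ht
    rw [Set.uIoc_of_le hx.1] at ht
    have htI : t ∈ Icc lam (1+lam) := ⟨le_of_lt ht.1, le_trans ht.2 hx.2⟩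
    have ht0 : 0 < t := lt_of_lt_of_le hlam htI.1
    have h1 : Pl p lam c t ^ k / t ^ l - c^k * (1 / t ^ l)
        = (Pl p lam c t ^ k - c^k) / t ^ l := by ring
    rw [h1, abs_div, abs_of_pos (pow_pos ht0 _)]
    have h2 := Pl_pow_diff htI hc k
    have h3 : lam ^ l ≤ t ^ l := pow_le_pow_left₀ (le_of_lt hlam) htI.1 _
    have h4 : (0:ℝ) < lam ^ l := by positivity
    have h5 : (0:ℝ) < t ^ l := by positivity
    rw [div_le_iff₀ h5]
    calc |Pl p lam c t ^ k - c^k| ≤ |p| * (k * 2^k) * c^k / c := by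
          exact_mod_cast h2
    _ = (|p| * (k * 2^k) / lam^l) * (c^k/c) * lam^l := by
          field_simp
    _ ≤ (|p| * (k * 2^k) / lam^l) * (c^k/c) * t^l := by
          apply mul_le_mul_of_nonneg_left h3
          positivity
  have hnorm := intervalIntegral.norm_integral_le_of_norm_le_const
    (f := fun t : ℝ => Pl p lam c t ^ k / t ^ l - c^k * (1 / t ^ l))
    (C := (|p| * (k * 2^k) / lam^l) * (c^k/c))
    (fun t ht => by rw [Real.norm_eq_abs]; exact hbound t ht)
  rw [Real.norm_eq_abs] at hnorm
  calc |∫ t in lam..x, (Pl p lam c t ^ k / t ^ l - c^k * (1 / t ^ l))|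
      ≤ (|p| * (k * 2^k) / lam^l) * (c^k/c) * |x - lam| := hnorm
  _ ≤ (|p| * (k * 2^k) / lam^l) * (c^k/c) * 1 := by
        apply mul_le_mul_of_nonneg_left _ (by positivity)
        rw [abs_of_nonneg (by linarith [hx.1])]
        linarith [hx.2]
  _ = _ := by ring

/-- crude bound: `|∫ Pl^k / t^l| ≤ 2^k c^k / lam^l` -/
lemma Gk_abs (k l : ℕ) {lam p c x : ℝ} (hlam : 0 < lam) (hx : x ∈ Icc lam (1+lam))
    (hc : 1 + |p| ≤ c) :
    |∫ t in lam..x, Pl p lam c t ^ k / t ^ l| ≤ 2^k * c^k / lam^l := by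
  have hc0 : (0:ℝ) < c := by linarith [abs_nonneg p]
  have hx0 : 0 < x := lt_of_lt_of_le hlam hx.1
  have hbound : ∀ t ∈ Set.uIoc lam x,
      ‖Pl p lam c t ^ k / t ^ l‖ ≤ 2^k * c^k / lam^l := by
    intro t ht
    rw [Set.uIoc_of_le hx.1] at ht
    have htI : t ∈ Icc lam (1+lam) := ⟨le_of_lt ht.1, le_trans ht.2 hx.2⟩
    have ht0 : 0 < t := lt_of_lt_of_le hlam htI.1
    rw [Real.norm_eq_abs, abs_div, abs_of_pos (pow_pos ht0 _)]
    have h2 := Pl_pow_abs htI hc k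
    have h3 : lam ^ l ≤ t ^ l := pow_le_pow_left₀ (le_of_lt hlam) htI.1 _
    have h4 : (0:ℝ) < lam ^ l := by positivity
    have h5 : (0:ℝ) < t ^ l := by positivity
    rw [div_le_div_iff₀ h5 h4]
    calc |Pl p lam c t ^ k| * lam ^ l ≤ (2^k * c^k) * lam^l := by
          apply mul_le_mul_of_nonneg_right h2 (le_of_lt h4)
    _ ≤ (2^k * c^k) * t^l := by
          apply mul_le_mul_of_nonneg_left h3 (by positivity)
    _ = 2^k * c^k * t^l := by ring
  have hnorm := intervalIntegral.norm_integral_le_of_norm_le_const hbound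
  rw [Real.norm_eq_abs] at hnorm
  calc |∫ t in lam..x, Pl p lam c t ^ k / t ^ l| ≤ 2^k * c^k / lam^l * |x - lam| := hnorm
  _ ≤ 2^k * c^k / lam^l * 1 := by
        apply mul_le_mul_of_nonneg_left _ (by positivity)
        rw [abs_of_nonneg (by linarith [hx.1])]
        linarith [hx.2]
  _ = _ := by ring

/-- bound for a weighted integral over `[lam, 1+lam]` against a pointwise bound -/
lemma weighted_int_bound (w : ℕ) {lam : ℝ} (hlam : 0 < lam) {F : ℝ → ℝ} {C : ℝ}
    (hF : ContinuousOn F (Set.uIcc lam (1+lam)))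
    (hbd : ∀ t ∈ Icc lam (1+lam), |F t| ≤ C) :
    |∫ t in lam..(1+lam), t^w * F t| ≤ (1+lam)^w * C := by
  have hX : lam ≤ 1 + lam := by linarith
  have hbound : ∀ t ∈ Set.uIoc lam (1+lam), ‖t^w * F t‖ ≤ (1+lam)^w * C := by
    intro t ht
    rw [Set.uIoc_of_le hX] at ht
    have htI : t ∈ Icc lam (1+lam) := ⟨le_of_lt ht.1, ht.2⟩
    have ht0 : 0 < t := lt_of_lt_of_le hlam htI.1
    have hC0 : 0 ≤ C := le_trans (abs_nonneg _) (hbd t htI)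
    rw [Real.norm_eq_abs, abs_mul, abs_of_pos (pow_pos ht0 _)]
    apply mul_le_mul (pow_le_pow_left₀ (le_of_lt ht0) htI.2 w) (hbd t htI) (abs_nonneg _)
      (by positivity)
  have hnorm := intervalIntegral.norm_integral_le_of_norm_le_const hbound
  rw [Real.norm_eq_abs] at hnorm
  calc |∫ t in lam..(1+lam), t^w * F t| ≤ (1+lam)^w * C * |1 + lam - lam| := hnorm
  _ = (1+lam)^w * C := by
        have : |1 + lam - lam| = 1 := by norm_num
        rw [this, mul_one]



noncomputable def Ff (j : ℕ) (lam c x : ℝ) : ℝ := 2*c^(j+1) * ((x - lam)*(1 + lam - x))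
noncomputable def Ff1 (j : ℕ) (lam c x : ℝ) : ℝ := 2*c^(j+1) * ((1 + 2*lam) - 2*x)
noncomputable def Sf (j : ℕ) (lam p c A B x : ℝ) : ℝ :=
  -A * Pl p lam c x^(j+1) + B*x^2*Pl p lam c x^j
    - c^(j+1)*((4*(j:ℝ)+4)*x^2 - (4*(j:ℝ)+8)*(lam*(1+lam)))

lemma Ff_hasDeriv (j : ℕ) (lam c x : ℝ) : HasDerivAt (Ff j lam c) (Ff1 j lam c x) x := by
  have h := (((hasDerivAt_id x).sub_const lam).mul
    ((hasDerivAt_id x).const_sub (1 + lam))).const_mul (2*c^(j+1))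
  refine h.congr_deriv ?_
  simp only [Ff1, id_eq]
  ring

lemma Ff1_hasDeriv (j : ℕ) (lam c x : ℝ) : HasDerivAt (Ff1 j lam c) (-(4*c^(j+1))) x := by
  have h := (((hasDerivAt_id x).const_mul (2:ℝ)).const_sub (1 + 2*lam)).const_mul (2*c^(j+1))
  refine h.congr_deriv ?_
  ring

lemma Sf_contOn (j : ℕ) (lam p c A B : ℝ) :
    ContinuousOn (fun t => Sf j lam p c A B t / t^(2*j+5)) (Ioi (0:ℝ)) := by
  apply ContinuousOn.div
  · apply Continuous.continuousOn
    unfold Sf Pl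
    fun_prop
  · exact (continuous_pow _).continuousOn
  · exact fun t ht => pow_ne_zero _ (ne_of_gt ht)


noncomputable def V1F (j : ℕ) (lam c : ℝ) (f : ℝ → ℝ) (s : ℝ) : ℝ :=
  (deriv f s - Ff1 j lam c s - (f s - Ff j lam c s)/s)/s^(2*j+3)

/-- The representation of the solution via first-order reduction + FTC. -/
lemma rep_lemma (j : ℕ) (lam p c A B : ℝ) (hlam : 0 < lam) (f : ℝ → ℝ) (a b : ℝ)
    (hab1 : a < lam) (hab2 : 1 + lam < b) (hf : ContDiffOn ℝ 2 f (Ioo a b))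
    (hODE : ∀ x ∈ Icc lam (1+lam),
      x^2 * deriv (deriv f) x - (2*(j:ℝ)+4)*x*deriv f x + (2*(j:ℝ)+4)*f x
        = -A * Pl p lam c x^(j+1) + B*x^2*Pl p lam c x^j)
    (hflam : f lam = 0) (hdlam : deriv f lam = 2*c^(j+1)) :
    ContinuousOn (V1F j lam c f) (Icc lam (1+lam)) ∧
    (∀ x ∈ Icc lam (1+lam),
      V1F j lam c f x = ∫ t in lam..x, Sf j lam p c A B t / t^(2*j+5)) ∧
    (∀ x ∈ Icc lam (1+lam),
      f x - Ff j lam c x = x * ∫ t in lam..x, t^(2*j+2) * V1F j lam c f t) := by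
  simp only [V1F]
  set X := 1 + lam with hX
  have hsubIcc : Icc lam X ⊆ Ioo a b := fun t ht =>
    ⟨lt_of_lt_of_le hab1 ht.1, lt_of_le_of_lt ht.2 hab2⟩
  have hopen : IsOpen (Ioo a b) := isOpen_Ioo
  have hfd : ∀ t ∈ Ioo a b, HasDerivAt f (deriv f t) t := by
    intro t ht
    exact ((hf.differentiableOn (by norm_num) t ht).differentiableAt
      (hopen.mem_nhds ht)).hasDerivAt
  have hf' : ContDiffOn ℝ 1 (deriv f) (Ioo a b) := hf.deriv_of_isOpen hopen (by norm_num)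
  have hfd2 : ∀ t ∈ Ioo a b, HasDerivAt (deriv f) (deriv (deriv f) t) t := by
    intro t ht
    exact ((hf'.differentiableOn (by norm_num) t ht).differentiableAt
      (hopen.mem_nhds ht)).hasDerivAt
  have hfc : ContinuousOn f (Ioo a b) := hf.continuousOn
  have hf'c : ContinuousOn (deriv f) (Ioo a b) := hf'.continuousOn
  set V1 : ℝ → ℝ :=
    fun s => (deriv f s - Ff1 j lam c s - (f s - Ff j lam c s)/s)/s^(2*j+3) with hV1def
  have hV1c : ContinuousOn V1 (Icc lam X) := by
    apply ContinuousOn.div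
    · apply ContinuousOn.sub
      · apply ContinuousOn.sub (hf'c.mono hsubIcc)
        exact (Continuous.continuousOn (by unfold Ff1; fun_prop))
      · apply ContinuousOn.div
        · apply ContinuousOn.sub (hfc.mono hsubIcc)
          exact (Continuous.continuousOn (by unfold Ff; fun_prop))
        · exact continuousOn_id
        · exact fun t ht => ne_of_gt (lt_of_lt_of_le hlam ht.1)
    · exact (continuous_pow _).continuousOn
    · exact fun t ht => pow_ne_zero _ (ne_of_gt (lt_of_lt_of_le hlam ht.1))
  have hVd : ∀ t ∈ Icc lam X,
      HasDerivAt V1 (Sf j lam p c A B t / t^(2*j+5)) t := by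
    intro t ht
    have htO : t ∈ Ioo a b := hsubIcc ht
    have ht0 : 0 < t := lt_of_lt_of_le hlam ht.1
    have ht2 : t ≠ 0 := ne_of_gt ht0
    have h1 : HasDerivAt f (deriv f t) t := hfd t htO
    have h2 : HasDerivAt (deriv f) (deriv (deriv f) t) t := hfd2 t htO
    have hFf := Ff_hasDeriv j lam c t
    have hFf1 := Ff1_hasDeriv j lam c t
    have hnum : HasDerivAt (fun s => deriv f s - Ff1 j lam c s - (f s - Ff j lam c s)/s)
        ((deriv (deriv f) t - (-(4*c^(j+1))))
          - (((deriv f t - Ff1 j lam c t) * t - (f t - Ff j lam c t) * 1)/t^2)) t :=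
      (h2.sub hFf1).sub ((h1.sub hFf).div (hasDerivAt_id t) ht2)
    have hq : HasDerivAt (fun s : ℝ => s^(2*j+3)) ((2*(j:ℝ)+3)*t^(2*j+2)) t := by
      have h := hasDerivAt_pow (2*j+3) t
      have e1 : 2*j+3-1 = 2*j+2 := rfl
      have e2 : ((2*j+3 : ℕ) : ℝ) = 2*(j:ℝ)+3 := by push_cast; ring
      rw [e1, e2] at h
      exact h
    have hVt := hnum.div hq (pow_ne_zero _ ht2)
    refine hVt.congr_deriv ?_
    have hODEt := hODE t ht
    have hdd : deriv (deriv f) t = (-A * Pl p lam c t^(j+1) + B*t^2*Pl p lam c t^j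
        + (2*(j:ℝ)+4)*t*deriv f t - (2*(j:ℝ)+4)*f t)/t^2 := by
      rw [eq_div_iff (pow_ne_zero 2 ht2)]
      nlinarith [hODEt]
    rw [hdd]
    simp only [Sf, Ff, Ff1]
    field_simp
    ring
  refine ⟨hV1c, ?_, ?_⟩
  · intro x hx
    have hsub2 : Set.uIcc lam x ⊆ Icc lam X := by
      rw [Set.uIcc_of_le hx.1]
      exact Icc_subset_Icc (le_refl _) hx.2
    have hint : IntervalIntegrable (fun t => Sf j lam p c A B t / t^(2*j+5)) volume lam x :=
      ((Sf_contOn j lam p c A B).mono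
        (uIcc_subset_Ioi hlam (lt_of_lt_of_le hlam hx.1))).intervalIntegrable
    have hftc := intervalIntegral.integral_eq_sub_of_hasDerivAt
      (f := V1) (f' := fun t => Sf j lam p c A B t / t^(2*j+5))
      (fun t htt => hVd t (hsub2 htt)) hint
    have hV1lam : V1 lam = 0 := by
      have hnum0 : deriv f lam - Ff1 j lam c lam - (f lam - Ff j lam c lam)/lam = 0 := by
        rw [hflam, hdlam]
        simp only [Ff, Ff1]
        ring
      simp only [hV1def, hnum0, zero_div]
    rw [hftc, hV1lam, sub_zero]
  · intro x hx
    have hx0 : 0 < x := lt_of_lt_of_le hlam hx.1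
    have hsub2 : Set.uIcc lam x ⊆ Icc lam X := by
      rw [Set.uIcc_of_le hx.1]
      exact Icc_subset_Icc (le_refl _) hx.2
    have hWd : ∀ t ∈ Set.uIcc lam x,
        HasDerivAt (fun s => (f s - Ff j lam c s)/s) (t^(2*j+2) * V1 t) t := by
      intro t htt
      have ht := hsub2 htt
      have htO : t ∈ Ioo a b := hsubIcc ht
      have ht0 : 0 < t := lt_of_lt_of_le hlam ht.1
      have ht2 : t ≠ 0 := ne_of_gt ht0
      have hW := ((hfd t htO).sub (Ff_hasDeriv j lam c t)).div (hasDerivAt_id t) ht2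
      refine hW.congr_deriv ?_
      simp only [hV1def, id_eq, Pi.sub_apply]
      field_simp
      ring
    have hint : IntervalIntegrable (fun t => t^(2*j+2) * V1 t) volume lam x :=
      (((continuous_pow _).continuousOn.mul (hV1c.mono hsub2)).intervalIntegrable)
    have hftc := intervalIntegral.integral_eq_sub_of_hasDerivAt hWd hint
    have hWlam : (f lam - Ff j lam c lam)/lam = 0 := by
      rw [hflam]; simp [Ff]
    rw [hftc, hWlam, sub_zero, mul_div_cancel₀ _ (ne_of_gt hx0)]

/-- simple uniform bound for interval integrals starting at `lam` -/
lemma int_abs_le {lam x : ℝ} (hlam : 0 < lam) (hx : x ∈ Icc lam (1+lam)) {q : ℝ → ℝ} {C : ℝ}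
    (hq : ∀ t ∈ Icc lam (1+lam), |q t| ≤ C) : |∫ t in lam..x, q t| ≤ C := by
  have hC0 : 0 ≤ C := le_trans (abs_nonneg _) (hq lam ⟨le_refl _, by linarith⟩)
  have hbound : ∀ t ∈ Set.uIoc lam x, ‖q t‖ ≤ C := by
    intro t ht
    rw [Set.uIoc_of_le hx.1] at ht
    exact hq t ⟨le_of_lt ht.1, le_trans ht.2 hx.2⟩
  have hnorm := intervalIntegral.norm_integral_le_of_norm_le_const hbound
  rw [Real.norm_eq_abs] at hnorm
  calc |∫ t in lam..x, q t| ≤ C * |x - lam| := hnorm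
  _ ≤ C * 1 := by
      apply mul_le_mul_of_nonneg_left _ hC0
      rw [abs_of_nonneg (by linarith [hx.1])]
      linarith [hx.2]
  _ = C := mul_one C

lemma gI_abs (j : ℕ) {lam x : ℝ} (hlam : 0 < lam) (hx : x ∈ Icc lam (1+lam)) :
    |gI j lam x| ≤ 1 / lam^(2*j+5) := by
  apply int_abs_le hlam hx
  intro t ht
  have ht0 : 0 < t := lt_of_lt_of_le hlam ht.1
  rw [abs_of_pos (by positivity)]
  apply div_le_div_of_nonneg_left one_pos.le (by positivity)
    (pow_le_pow_left₀ hlam.le ht.1 _)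

lemma hI_abs (j : ℕ) {lam x : ℝ} (hlam : 0 < lam) (hx : x ∈ Icc lam (1+lam)) :
    |hI j lam x| ≤ 1 / lam^(2*j+3) := by
  apply int_abs_le hlam hx
  intro t ht
  have ht0 : 0 < t := lt_of_lt_of_le hlam ht.1
  rw [abs_of_pos (by positivity)]
  apply div_le_div_of_nonneg_left one_pos.le (by positivity)
    (pow_le_pow_left₀ hlam.le ht.1 _)

-- wrappers for G1 G2
lemma G1_est (j : ℕ) {lam p c x : ℝ} (hlam : 0 < lam) (hx : x ∈ Icc lam (1+lam))
    (hc : 1 + |p| ≤ c) :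
    |G1 j lam p c x - c^(j+1) * gI j lam x|
      ≤ (|p| * ((j+1) * 2^(j+1)) / lam^(2*j+5)) * (c^(j+1)/c) := by
  have h := Gk_est (j+1) (2*j+5) (p := p) (c := c) hlam hx hc
  push_cast at h
  exact h

lemma G2_est (j : ℕ) {lam p c x : ℝ} (hlam : 0 < lam) (hx : x ∈ Icc lam (1+lam))
    (hc : 1 + |p| ≤ c) :
    |G2 j lam p c x - c^j * hI j lam x|
      ≤ (|p| * (j * 2^j) / lam^(2*j+3)) * (c^j/c) := by
  have h := Gk_est j (2*j+3) (p := p) (c := c) hlam hx hc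
  push_cast at h
  exact h

lemma G1_abs (j : ℕ) {lam p c x : ℝ} (hlam : 0 < lam) (hx : x ∈ Icc lam (1+lam))
    (hc : 1 + |p| ≤ c) :
    |G1 j lam p c x| ≤ (2^(j+1) / lam^(2*j+5)) * c^(j+1) := by
  have := Gk_abs (j+1) (2*j+5) (p := p) hlam hx hc
  calc |G1 j lam p c x| ≤ 2^(j+1) * c^(j+1) / lam^(2*j+5) := this
  _ = (2^(j+1) / lam^(2*j+5)) * c^(j+1) := by ring

lemma G2_abs (j : ℕ) {lam p c x : ℝ} (hlam : 0 < lam) (hx : x ∈ Icc lam (1+lam))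
    (hc : 1 + |p| ≤ c) :
    |G2 j lam p c x| ≤ (2^j / lam^(2*j+3)) * c^j := by
  have := Gk_abs j (2*j+3) (p := p) hlam hx hc
  calc |G2 j lam p c x| ≤ 2^j * c^j / lam^(2*j+3) := this
  _ = (2^j / lam^(2*j+3)) * c^j := by ring

noncomputable def HH1 (j : ℕ) (lam p c : ℝ) : ℝ :=
  ∫ t in lam..(1+lam), t^(2*j+2) * G1 j lam p c t
noncomputable def HH2 (j : ℕ) (lam p c : ℝ) : ℝ :=
  ∫ t in lam..(1+lam), t^(2*j+2) * G2 j lam p c t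

lemma G1_contOn (j : ℕ) {lam p c : ℝ} (hlam : 0 < lam) :
    ContinuousOn (G1 j lam p c) (Ioi (0:ℝ)) :=
  contOn_primitive hlam (contOn_Pl_div _ _ _ _ _)
lemma G2_contOn (j : ℕ) {lam p c : ℝ} (hlam : 0 < lam) :
    ContinuousOn (G2 j lam p c) (Ioi (0:ℝ)) :=
  contOn_primitive hlam (contOn_Pl_div _ _ _ _ _)

lemma sub_uIcc {lam : ℝ} (hlam : 0 < lam) : Set.uIcc lam (1+lam) ⊆ Ioi (0:ℝ) :=
  uIcc_subset_Ioi hlam (by linarith)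

lemma HH1_est (j : ℕ) {lam p c : ℝ} (hlam : 0 < lam) (hc : 1 + |p| ≤ c) :
    |HH1 j lam p c - c^(j+1) * GhI j lam|
      ≤ (1+lam)^(2*j+2) * ((|p| * ((j+1) * 2^(j+1)) / lam^(2*j+5)) * (c^(j+1)/c)) := by
  have hkey : HH1 j lam p c - c^(j+1) * GhI j lam
      = ∫ t in lam..(1+lam), t^(2*j+2) * (G1 j lam p c t - c^(j+1) * gI j lam t) := by
    rw [HH1, GhI, ← intervalIntegral.integral_const_mul, ← intervalIntegral.integral_sub]
    · apply intervalIntegral.integral_congr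
      intro t _; ring
    · exact (((continuous_pow _).continuousOn).mul
        ((G1_contOn j hlam).mono (sub_uIcc hlam))).intervalIntegrable
    · apply ContinuousOn.intervalIntegrable
      apply continuousOn_const.mul (((continuous_pow _).continuousOn).mul
        (((contOn_primitive hlam (contOn_inv_pow _))).mono (sub_uIcc hlam)))
  rw [hkey]
  apply weighted_int_bound _ hlam
  · exact ((G1_contOn j hlam).mono (sub_uIcc hlam)).sub
      (continuousOn_const.mul (((contOn_primitive hlam (contOn_inv_pow _))).mono
        (sub_uIcc hlam)))
  · intro t ht
    exact G1_est j hlam ht hc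

lemma HH2_est (j : ℕ) {lam p c : ℝ} (hlam : 0 < lam) (hc : 1 + |p| ≤ c) :
    |HH2 j lam p c - c^j * HhI j lam|
      ≤ (1+lam)^(2*j+2) * ((|p| * (j * 2^j) / lam^(2*j+3)) * (c^j/c)) := by
  have hkey : HH2 j lam p c - c^j * HhI j lam
      = ∫ t in lam..(1+lam), t^(2*j+2) * (G2 j lam p c t - c^j * hI j lam t) := by
    rw [HH2, HhI, ← intervalIntegral.integral_const_mul, ← intervalIntegral.integral_sub]
    · apply intervalIntegral.integral_congr
      intro t _; ring
    · exact (((continuous_pow _).continuousOn).mul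
        ((G2_contOn j hlam).mono (sub_uIcc hlam))).intervalIntegrable
    · apply ContinuousOn.intervalIntegrable
      apply continuousOn_const.mul (((continuous_pow _).continuousOn).mul
        (((contOn_primitive hlam (contOn_inv_pow _))).mono (sub_uIcc hlam)))
  rw [hkey]
  apply weighted_int_bound _ hlam
  · exact ((G2_contOn j hlam).mono (sub_uIcc hlam)).sub
      (continuousOn_const.mul (((contOn_primitive hlam (contOn_inv_pow _))).mono
        (sub_uIcc hlam)))
  · intro t ht
    exact G2_est j hlam ht hc

lemma HH1_abs (j : ℕ) {lam p c : ℝ} (hlam : 0 < lam) (hc : 1 + |p| ≤ c) :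
    |HH1 j lam p c| ≤ (1+lam)^(2*j+2) * ((2^(j+1) / lam^(2*j+5)) * c^(j+1)) := by
  rw [HH1]
  apply weighted_int_bound _ hlam ((G1_contOn j hlam).mono (sub_uIcc hlam))
  intro t ht
  exact G1_abs j hlam ht hc

lemma HH2_abs (j : ℕ) {lam p c : ℝ} (hlam : 0 < lam) (hc : 1 + |p| ≤ c) :
    |HH2 j lam p c| ≤ (1+lam)^(2*j+2) * ((2^j / lam^(2*j+3)) * c^j) := by
  rw [HH2]
  apply weighted_int_bound _ hlam ((G2_contOn j hlam).mono (sub_uIcc hlam))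
  intro t ht
  exact G2_abs j hlam ht hc

set_option maxHeartbeats 1200000

/-- Uniform asymptotics of the solution of the boundary value problem: the solution `f_c`
of `x² f'' - m x f' + m f = -A·P(x-λ)^(n-1) + B·x²·P(x-λ)^(n-2)` with the boundary
conditions `f(λ) = f(1+λ) = 0`, `f'(λ) = 2c^(n-1)`, `f'(1+λ) = -2(p+c)^(n-1)` satisfies,
uniformly for `x ∈ [0,1]`,
`f_c(x+λ) = 2c^(n-1)·x(1-x) + O(c^(n-2))` and `f_c'(x+λ) = 2c^(n-1)·(1-2x) + O(c^(n-2))`. -/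
theorem ruled_bvp_uniform_asymptotics
    (n : ℕ) (hn : 2 ≤ n) (lam p : ℝ) (hlam : 0 < lam) :
    ∃ c₀ K : ℝ, 0 < K ∧ ∀ c ≥ c₀, ∀ A B : ℝ, ∀ f : ℝ → ℝ,
      (∃ a b : ℝ, a < lam ∧ 1 + lam < b ∧ ContDiffOn ℝ 2 f (Set.Ioo a b)) →
      (∀ x ∈ Set.Icc lam (1 + lam),
        x ^ 2 * deriv (deriv f) x - (2 * n : ℝ) * x * deriv f x + (2 * n : ℝ) * f x
          = -A * (p * (x - lam) + c) ^ (n - 1) + B * x ^ 2 * (p * (x - lam) + c) ^ (n - 2)) →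
      f lam = 0 → f (1 + lam) = 0 →
      deriv f lam = 2 * c ^ (n - 1) → deriv f (1 + lam) = -2 * (p + c) ^ (n - 1) →
      ∀ x ∈ Set.Icc (0 : ℝ) 1,
        |f (x + lam) - 2 * c ^ (n - 1) * x * (1 - x)| ≤ K * c ^ (n - 2) ∧
        |deriv f (x + lam) - 2 * c ^ (n - 1) * (1 - 2 * x)| ≤ K * c ^ (n - 2) := by
  obtain ⟨j, rfl⟩ : ∃ j, n = j + 2 := ⟨n - 2, by omega⟩
  clear hn
  have hX0 : (0:ℝ) < 1 + lam := by linarith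
  have hX1 : (1:ℝ) ≤ 1 + lam := by linarith
  have hIX : (1+lam) ∈ Set.Icc lam (1+lam) := ⟨by linarith, le_refl _⟩
  -- uniform constants
  obtain ⟨CG1, hCG1_0, eG1⟩ : ∃ C : ℝ, 0 ≤ C ∧ ∀ c : ℝ, 1+|p| ≤ c →
      ∀ x ∈ Set.Icc lam (1+lam),
      |G1 j lam p c x - c^(j+1) * gI j lam x| ≤ C * (c^(j+1)/c) :=
    ⟨_, by positivity, fun c hc x hx => G1_est j hlam hx hc⟩
  obtain ⟨CG2, hCG2_0, eG2⟩ : ∃ C : ℝ, 0 ≤ C ∧ ∀ c : ℝ, 1+|p| ≤ c →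
      ∀ x ∈ Set.Icc lam (1+lam),
      |G2 j lam p c x - c^j * hI j lam x| ≤ C * (c^j/c) :=
    ⟨_, by positivity, fun c hc x hx => G2_est j hlam hx hc⟩
  obtain ⟨BG1, hBG1_0, bG1⟩ : ∃ C : ℝ, 0 ≤ C ∧ ∀ c : ℝ, 1+|p| ≤ c →
      ∀ x ∈ Set.Icc lam (1+lam), |G1 j lam p c x| ≤ C * c^(j+1) :=
    ⟨_, by positivity, fun c hc x hx => G1_abs j hlam hx hc⟩
  obtain ⟨BG2, hBG2_0, bG2⟩ : ∃ C : ℝ, 0 ≤ C ∧ ∀ c : ℝ, 1+|p| ≤ c →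
      ∀ x ∈ Set.Icc lam (1+lam), |G2 j lam p c x| ≤ C * c^j :=
    ⟨_, by positivity, fun c hc x hx => G2_abs j hlam hx hc⟩
  obtain ⟨CH1, hCH1_0, eH1⟩ : ∃ C : ℝ, 0 ≤ C ∧ ∀ c : ℝ, 1+|p| ≤ c →
      |HH1 j lam p c - c^(j+1) * GhI j lam| ≤ C * (c^(j+1)/c) := by
    refine ⟨(1+lam)^(2*j+2) * (|p| * ((j+1) * 2^(j+1)) / lam^(2*j+5)), by positivity, ?_⟩
    intro c hc
    have h := HH1_est j hlam hc
    calc |HH1 j lam p c - c^(j+1) * GhI j lam|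
        ≤ (1+lam)^(2*j+2) * ((|p| * ((j+1) * 2^(j+1)) / lam^(2*j+5)) * (c^(j+1)/c)) := h
    _ = (1+lam)^(2*j+2) * (|p| * ((j+1) * 2^(j+1)) / lam^(2*j+5)) * (c^(j+1)/c) := by ring
  obtain ⟨CH2, hCH2_0, eH2⟩ : ∃ C : ℝ, 0 ≤ C ∧ ∀ c : ℝ, 1+|p| ≤ c →
      |HH2 j lam p c - c^j * HhI j lam| ≤ C * (c^j/c) := by
    refine ⟨(1+lam)^(2*j+2) * (|p| * (j * 2^j) / lam^(2*j+3)), by positivity, ?_⟩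
    intro c hc
    have h := HH2_est j hlam hc
    calc |HH2 j lam p c - c^j * HhI j lam|
        ≤ (1+lam)^(2*j+2) * ((|p| * (j * 2^j) / lam^(2*j+3)) * (c^j/c)) := h
    _ = (1+lam)^(2*j+2) * (|p| * (j * 2^j) / lam^(2*j+3)) * (c^j/c) := by ring
  obtain ⟨BH1, hBH1_0, bH1⟩ : ∃ C : ℝ, 0 ≤ C ∧ ∀ c : ℝ, 1+|p| ≤ c →
      |HH1 j lam p c| ≤ C * c^(j+1) := by
    refine ⟨(1+lam)^(2*j+2) * (2^(j+1) / lam^(2*j+5)), by positivity, ?_⟩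
    intro c hc
    have h := HH1_abs j hlam hc
    calc |HH1 j lam p c| ≤ (1+lam)^(2*j+2) * ((2^(j+1) / lam^(2*j+5)) * c^(j+1)) := h
    _ = (1+lam)^(2*j+2) * (2^(j+1) / lam^(2*j+5)) * c^(j+1) := by ring
  obtain ⟨BH2, hBH2_0, bH2⟩ : ∃ C : ℝ, 0 ≤ C ∧ ∀ c : ℝ, 1+|p| ≤ c →
      |HH2 j lam p c| ≤ C * c^j := by
    refine ⟨(1+lam)^(2*j+2) * (2^j / lam^(2*j+3)), by positivity, ?_⟩
    intro c hc
    have h := HH2_abs j hlam hc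
    calc |HH2 j lam p c| ≤ (1+lam)^(2*j+2) * ((2^j / lam^(2*j+3)) * c^j) := h
    _ = (1+lam)^(2*j+2) * (2^j / lam^(2*j+3)) * c^j := by ring
  -- pointwise bound for the error part `Ee`
  obtain ⟨CEe, hCEe_0, eEe⟩ : ∃ C : ℝ, 0 ≤ C ∧ ∀ c : ℝ, 1+|p| ≤ c →
      ∀ t ∈ Set.Icc lam (1+lam),
      |(-((4*(j:ℝ)+8)*(lam*(1+lam))))*(Pl p lam c t^(j+1) - c^(j+1))
        + (4*(j:ℝ)+4)*c*(t^2*(Pl p lam c t^j - c^j))|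
        ≤ C * (c^(j+1)/c) := by
    refine ⟨(4*(j:ℝ)+8)*(lam*(1+lam))*(|p| * ((j+1) * 2^(j+1)))
      + (4*(j:ℝ)+4)*(1+lam)^2*(|p| * (j * 2^j)), by positivity, ?_⟩
    intro c hc t ht
    have hc0 : (0:ℝ) < c := by linarith [abs_nonneg p]
    have ht0 : 0 < t := lt_of_lt_of_le hlam ht.1
    have h1 := Pl_pow_diff ht hc (j+1)
    have h2 := Pl_pow_diff ht hc j
    push_cast at h1 h2
    have ht2 : t^2 ≤ (1+lam)^2 := by nlinarith [ht.2, ht0]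
    have hAbs1 : |(-((4*(j:ℝ)+8)*(lam*(1+lam))))*(Pl p lam c t^(j+1) - c^(j+1))|
        ≤ (4*(j:ℝ)+8)*(lam*(1+lam))*(|p| * ((j+1) * 2^(j+1)) * (c^(j+1)/c)) := by
      rw [abs_mul, abs_neg, abs_of_nonneg (by positivity)]
      have hco : (0:ℝ) ≤ (4*(j:ℝ)+8)*(lam*(1+lam)) := by positivity
      calc ((4*(j:ℝ)+8)*(lam*(1+lam))) * |Pl p lam c t^(j+1) - c^(j+1)|
          ≤ ((4*(j:ℝ)+8)*(lam*(1+lam))) * (|p| * (((j:ℝ)+1) * 2^(j+1)) * c^(j+1)/c) := by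
            apply mul_le_mul_of_nonneg_left _ hco
            calc |Pl p lam c t^(j+1) - c^(j+1)| ≤ |p| * (((j:ℝ)+1) * 2^(j+1)) * c^(j+1)/c := h1
            _ = |p| * (((j:ℝ)+1) * 2^(j+1)) * c^(j+1)/c := rfl
      _ = (4*(j:ℝ)+8)*(lam*(1+lam))*(|p| * ((j+1) * 2^(j+1)) * (c^(j+1)/c)) := by ring
    have hAbs2 : |(4*(j:ℝ)+4)*c*(t^2*(Pl p lam c t^j - c^j))|
        ≤ (4*(j:ℝ)+4)*(1+lam)^2*(|p| * (j * 2^j)) * (c^(j+1)/c) := by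
      rw [abs_mul, abs_mul]
      rw [abs_of_nonneg (by positivity : (0:ℝ) ≤ (4*(j:ℝ)+4)), abs_of_pos hc0, abs_mul,
        abs_of_nonneg (by positivity : (0:ℝ) ≤ t^2)]
      have hkey : c^(j+1)/c = c^j := by
        rw [pow_succ, mul_div_cancel_right₀ _ (ne_of_gt hc0)]
      rw [hkey]
      calc (4*(j:ℝ)+4)*c*(t^2*|Pl p lam c t^j - c^j|)
          ≤ (4*(j:ℝ)+4)*c*((1+lam)^2*(|p| * ((j:ℝ) * 2^j) * c^j/c)) := by
            apply mul_le_mul_of_nonneg_left _ (by positivity)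
            apply mul_le_mul ht2 h2 (abs_nonneg _) (by positivity)
      _ = (4*(j:ℝ)+4)*(1+lam)^2*(|p| * (j * 2^j)) * c^j := by
            field_simp
    calc |(-((4*(j:ℝ)+8)*(lam*(1+lam))))*(Pl p lam c t^(j+1) - c^(j+1))
        + (4*(j:ℝ)+4)*c*(t^2*(Pl p lam c t^j - c^j))|
        ≤ |(-((4*(j:ℝ)+8)*(lam*(1+lam))))*(Pl p lam c t^(j+1) - c^(j+1))|
          + |(4*(j:ℝ)+4)*c*(t^2*(Pl p lam c t^j - c^j))| := abs_add_le _ _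
    _ ≤ (4*(j:ℝ)+8)*(lam*(1+lam))*(|p| * ((j+1) * 2^(j+1)) * (c^(j+1)/c))
          + (4*(j:ℝ)+4)*(1+lam)^2*(|p| * (j * 2^j)) * (c^(j+1)/c) := by
        exact add_le_add hAbs1 hAbs2
    _ = _ := by ring
  -- limiting determinant
  have hδ0 : 0 < hI j lam (1+lam) * GhI j lam - gI j lam (1+lam) * HhI j lam :=
    delta0_pos j hlam
  set gX := gI j lam (1+lam) with hgXd
  set hXv := hI j lam (1+lam) with hhXd
  set Gh := GhI j lam with hGhd
  set Hh := HhI j lam with hHhd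
  set δ0 := hXv * Gh - gX * Hh with hδ0d
  -- assembled constants
  set CEI : ℝ := CEe / lam^(2*j+5) with hCEId
  set R1c : ℝ := CEI + 2*(|p| * ((j+1) * 2^(j+1))) with hR1d
  set R2c : ℝ := (1+lam)^(2*j+2) * CEI with hR2d
  set Kd : ℝ := BG1*CH2 + |Hh| * CG1 + BG2*CH1 + |Gh| * CG2 with hKdd
  set KA : ℝ := 2*(BH2*R1c + BG2*R2c)/δ0 with hKAd
  set KB : ℝ := 2*(BH1*R1c + BG1*R2c)/δ0 with hKBd
  set KV : ℝ := KA*BG1 + KB*BG2 + CEI with hKVd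
  set Kf : ℝ := (1+lam)^(2*j+3)*KV with hKfd
  set Kg : ℝ := (1+lam)^(2*j+3)*KV + Kf/lam with hKgd
  clear_value gX hXv Gh Hh δ0 CEI R1c R2c Kd KA KB KV Kf Kg
  have hCEI0 : 0 ≤ CEI := by rw [hCEId]; exact div_nonneg hCEe_0 (by positivity)
  have hR1c0 : 0 ≤ R1c := by
    rw [hR1d]
    have : (0:ℝ) ≤ 2*(|p| * ((j+1) * 2^(j+1))) := by positivity
    linarith
  have hR2c0 : 0 ≤ R2c := by rw [hR2d]; exact mul_nonneg (by positivity) hCEI0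
  have hKd0 : 0 ≤ Kd := by
    rw [hKdd]
    have h1 := mul_nonneg hBG1_0 hCH2_0
    have h2 := mul_nonneg (abs_nonneg Hh) hCG1_0
    have h3 := mul_nonneg hBG2_0 hCH1_0
    have h4 := mul_nonneg (abs_nonneg Gh) hCG2_0
    linarith
  have hKA0 : 0 ≤ KA := by
    rw [hKAd]
    apply div_nonneg _ hδ0.le
    have h1 := mul_nonneg hBH2_0 hR1c0
    have h2 := mul_nonneg hBG2_0 hR2c0
    linarith
  have hKB0 : 0 ≤ KB := by
    rw [hKBd]
    apply div_nonneg _ hδ0.le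
    have h1 := mul_nonneg hBH1_0 hR1c0
    have h2 := mul_nonneg hBG1_0 hR2c0
    linarith
  have hKV0 : 0 ≤ KV := by
    rw [hKVd]
    have h1 := mul_nonneg hKA0 hBG1_0
    have h2 := mul_nonneg hKB0 hBG2_0
    linarith
  have hKf0 : 0 ≤ Kf := by rw [hKfd]; exact mul_nonneg (by positivity) hKV0
  have hKg0 : 0 ≤ Kg := by
    rw [hKgd]
    have h1 := mul_nonneg (le_of_lt (pow_pos hX0 (2*j+3))) hKV0
    have h2 := div_nonneg hKf0 hlam.le
    linarith
  refine ⟨1 + |p| + 2*Kd/δ0, Kf + Kg + 1, by linarith, ?_⟩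
  intro c hc A B f hex hODE hflam hfX hdlam hdX
  obtain ⟨a, b, hab1, hab2, hf⟩ := hex
  have hdiv0 : 0 ≤ 2*Kd/δ0 := div_nonneg (by linarith) hδ0.le
  have hc1 : 1 + |p| ≤ c := by linarith only [hc, hdiv0]
  have hc0 : (0:ℝ) < c := by linarith only [hc1, abs_nonneg p]
  have hcKd : 2*Kd/δ0 ≤ c := by
    have : (0:ℝ) ≤ 1 + |p| := by positivity
    linarith only [hc, this]
  have hpow_succ : c^(j+1)/c = c^j := by
    rw [pow_succ, mul_div_cancel_right₀ _ (ne_of_gt hc0)]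
  -- rep lemma
  have hODE' : ∀ y ∈ Set.Icc lam (1+lam),
      y^2 * deriv (deriv f) y - (2*(j:ℝ)+4)*y*deriv f y + (2*(j:ℝ)+4)*f y
        = -A * Pl p lam c y^(j+1) + B*y^2*Pl p lam c y^j := by
    intro y hy
    have h := hODE y hy
    have e1 : j+2-1 = j+1 := rfl
    have e2 : j+2-2 = j := rfl
    rw [e1, e2] at h
    push_cast at h
    simp only [Pl]
    linear_combination h
  have hdlam' : deriv f lam = 2*c^(j+1) := hdlam
  obtain ⟨hV1c, hrep1, hrep2⟩ :=
    rep_lemma j lam p c A B hlam f a b hab1 hab2 hf hODE' hflam hdlam'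
  -- error decomposition
  set α := A - (4*(j:ℝ)+8)*(lam*(1+lam)) with hαd
  set β := B - (4*(j:ℝ)+4)*c with hβd
  set Ee : ℝ → ℝ := fun t => (-((4*(j:ℝ)+8)*(lam*(1+lam))))*(Pl p lam c t^(j+1) - c^(j+1))
      + (4*(j:ℝ)+4)*c*(t^2*(Pl p lam c t^j - c^j)) with hEed
  set EI : ℝ → ℝ := fun y => ∫ t in lam..y, Ee t / t^(2*j+5) with hEId
  have hEecont : ContinuousOn (fun t => Ee t / t^(2*j+5)) (Set.Ioi (0:ℝ)) := by
    apply ContinuousOn.div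
    · apply Continuous.continuousOn
      rw [hEed]
      simp only [Pl]
      fun_prop
    · exact (continuous_pow _).continuousOn
    · exact fun t ht => pow_ne_zero _ (ne_of_gt ht)
  have hEIcont : ContinuousOn EI (Set.Ioi (0:ℝ)) := by
    rw [hEId]
    exact contOn_primitive hlam hEecont
  have hEe_bd : ∀ t ∈ Set.Icc lam (1+lam), |Ee t| ≤ CEe * (c^(j+1)/c) := by
    intro t ht
    rw [hEed]
    exact eEe c hc1 t ht
  have hEIbd : ∀ y ∈ Set.Icc lam (1+lam), |EI y| ≤ CEI * (c^(j+1)/c) := by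
    intro y hy
    rw [hEId]
    apply int_abs_le hlam hy
    intro t ht
    have ht0 : 0 < t := lt_of_lt_of_le hlam ht.1
    rw [abs_div, abs_of_pos (pow_pos ht0 _)]
    calc |Ee t| / t^(2*j+5) ≤ (CEe * (c^(j+1)/c)) / lam^(2*j+5) :=
          div_le_div₀ (by positivity) (hEe_bd t ht) (pow_pos hlam _)
            (pow_le_pow_left₀ hlam.le ht.1 _)
    _ = CEI * (c^(j+1)/c) := by rw [hCEId]; ring
  have hsplit : ∀ y ∈ Set.Icc lam (1+lam),
      V1F j lam c f y = -α * G1 j lam p c y + β * G2 j lam p c y + EI y := by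
    intro y hy
    rw [hrep1 y hy]
    have hy0 : 0 < y := lt_of_lt_of_le hlam hy.1
    have hsub2 : Set.uIcc lam y ⊆ Set.Ioi (0:ℝ) := uIcc_subset_Ioi hlam hy0
    have hi1 : IntervalIntegrable (fun t => Pl p lam c t^(j+1)/t^(2*j+5))
        MeasureTheory.volume lam y :=
      ((contOn_Pl_div p lam c _ _).mono hsub2).intervalIntegrable
    have hi2 : IntervalIntegrable (fun t => Pl p lam c t^j/t^(2*j+3))
        MeasureTheory.volume lam y :=
      ((contOn_Pl_div p lam c _ _).mono hsub2).intervalIntegrable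
    have hi3 : IntervalIntegrable (fun t => Ee t/t^(2*j+5)) MeasureTheory.volume lam y :=
      (hEecont.mono hsub2).intervalIntegrable
    have hcongr : ∫ t in lam..y, Sf j lam p c A B t / t^(2*j+5)
        = ∫ t in lam..y, (-α * (Pl p lam c t^(j+1)/t^(2*j+5))
            + β * (Pl p lam c t^j/t^(2*j+3)) + Ee t/t^(2*j+5)) := by
      apply intervalIntegral.integral_congr
      intro t ht
      have ht0 : (0:ℝ) < t := hsub2 ht
      have ht2 : t ≠ 0 := ne_of_gt ht0
      simp only [Sf, hEed, hαd, hβd]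
      field_simp
      ring
    rw [hcongr, intervalIntegral.integral_add ((hi1.const_mul _).add (hi2.const_mul _)) hi3,
      intervalIntegral.integral_add (hi1.const_mul _) (hi2.const_mul _),
      intervalIntegral.integral_const_mul, intervalIntegral.integral_const_mul]
    rw [hEId, G1, G2]
  clear_value Ee EI
  -- values at the right endpoint
  have hFfX : Ff j lam c (1+lam) = 0 := by unfold Ff; ring
  have hFf1X : Ff1 j lam c (1+lam) = -(2*c^(j+1)) := by unfold Ff1; ring
  have hV1X : V1F j lam c f (1+lam)
      = (-2*((p+c)^(j+1) - c^(j+1)))/(1+lam)^(2*j+3) := by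
    have e1 : j+2-1 = j+1 := rfl
    rw [V1F, hfX, hFfX, hFf1X, hdX, e1]
    ring
  have hV1Xabs : |V1F j lam c f (1+lam)|
      ≤ 2*(|p| * ((j+1) * 2^(j+1))) * (c^(j+1)/c) := by
    rw [hV1X]
    rw [abs_div, abs_of_pos (pow_pos hX0 _)]
    have hPX : Pl p lam c (1+lam) = p + c := by unfold Pl; ring
    have h := Pl_pow_diff hIX hc1 (j+1)
    rw [hPX] at h
    push_cast at h
    have hnum : |-2*((p+c)^(j+1) - c^(j+1))|
        ≤ 2*(|p| * (((j:ℝ)+1) * 2^(j+1))) * (c^(j+1)/c) := by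
      rw [abs_mul]
      have h2 : |(-2 : ℝ)| = 2 := by norm_num
      rw [h2]
      calc 2 * |(p+c)^(j+1) - c^(j+1)|
          ≤ 2 * (|p| * (((j:ℝ)+1) * 2^(j+1)) * c^(j+1)/c) := by linarith only [h]
      _ = 2*(|p| * (((j:ℝ)+1) * 2^(j+1))) * (c^(j+1)/c) := by ring
    have hden : (1:ℝ) ≤ (1+lam)^(2*j+3) := by
      have := pow_le_pow_left₀ (by norm_num : (0:ℝ) ≤ 1) hX1 (2*j+3)
      simpa using this
    calc |(-2*((p+c)^(j+1) - c^(j+1)))| / (1+lam)^(2*j+3)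
        ≤ |(-2*((p+c)^(j+1) - c^(j+1)))| := div_le_self (abs_nonneg _) hden
    _ ≤ 2*(|p| * (((j:ℝ)+1) * 2^(j+1))) * (c^(j+1)/c) := hnum
  have heq1 : α * G1 j lam p c (1+lam) - β * G2 j lam p c (1+lam)
      = EI (1+lam) - V1F j lam c f (1+lam) := by
    have h := hsplit (1+lam) hIX
    linear_combination h
  have hr1 : |α * G1 j lam p c (1+lam) - β * G2 j lam p c (1+lam)|
      ≤ R1c * (c^(j+1)/c) := by
    rw [heq1]
    calc |EI (1+lam) - V1F j lam c f (1+lam)|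
        ≤ |EI (1+lam)| + |V1F j lam c f (1+lam)| := abs_sub _ _
    _ ≤ CEI * (c^(j+1)/c) + 2*(|p| * ((j+1) * 2^(j+1))) * (c^(j+1)/c) :=
        add_le_add (hEIbd (1+lam) hIX) hV1Xabs
    _ = R1c * (c^(j+1)/c) := by rw [hR1d]; ring
  -- second equation
  have hint0 : ∫ t in lam..(1+lam), t^(2*j+2) * V1F j lam c f t = 0 := by
    have h := hrep2 (1+lam) hIX
    rw [hfX, hFfX] at h
    have h2 : (1+lam) * ∫ t in lam..(1+lam), t^(2*j+2) * V1F j lam c f t = 0 := by linear_combination -h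
    rcases mul_eq_zero.mp h2 with h3 | h3
    · exact absurd h3 (ne_of_gt hX0)
    · exact h3
  have hXle : lam ≤ 1 + lam := by linarith only [hlam]
  have ig1 : IntervalIntegrable (fun t => t^(2*j+2) * G1 j lam p c t)
      MeasureTheory.volume lam (1+lam) :=
    ((continuous_pow _).continuousOn.mul
      ((G1_contOn j hlam).mono (sub_uIcc hlam))).intervalIntegrable
  have ig2 : IntervalIntegrable (fun t => t^(2*j+2) * G2 j lam p c t)
      MeasureTheory.volume lam (1+lam) :=
    ((continuous_pow _).continuousOn.mul
      ((G2_contOn j hlam).mono (sub_uIcc hlam))).intervalIntegrable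
  have igE : IntervalIntegrable (fun t => t^(2*j+2) * EI t)
      MeasureTheory.volume lam (1+lam) :=
    ((continuous_pow _).continuousOn.mul
      (hEIcont.mono (sub_uIcc hlam))).intervalIntegrable
  have hsplit2 : ∫ t in lam..(1+lam), t^(2*j+2) * V1F j lam c f t
      = -α * HH1 j lam p c + β * HH2 j lam p c
        + ∫ t in lam..(1+lam), t^(2*j+2) * EI t := by
    have hcongr2 : ∫ t in lam..(1+lam), t^(2*j+2) * V1F j lam c f t
        = ∫ t in lam..(1+lam), (-α*(t^(2*j+2) * G1 j lam p c t)
            + β*(t^(2*j+2) * G2 j lam p c t) + t^(2*j+2) * EI t) := by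
      apply intervalIntegral.integral_congr
      intro t ht
      rw [Set.uIcc_of_le hXle] at ht
      simp only []
      rw [hsplit t ht]
      ring
    rw [hcongr2, intervalIntegral.integral_add ((ig1.const_mul _).add (ig2.const_mul _)) igE,
      intervalIntegral.integral_add (ig1.const_mul _) (ig2.const_mul _),
      intervalIntegral.integral_const_mul, intervalIntegral.integral_const_mul, HH1, HH2]
  have hr2 : |α * HH1 j lam p c - β * HH2 j lam p c| ≤ R2c * (c^(j+1)/c) := by
    have heq2 : α * HH1 j lam p c - β * HH2 j lam p c
        = ∫ t in lam..(1+lam), t^(2*j+2) * EI t := by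
      have h0 := hint0
      rw [hsplit2] at h0
      linear_combination -h0
    rw [heq2]
    calc |∫ t in lam..(1+lam), t^(2*j+2) * EI t|
        ≤ (1+lam)^(2*j+2) * (CEI * (c^(j+1)/c)) :=
          weighted_int_bound (2*j+2) hlam (hEIcont.mono (sub_uIcc hlam)) hEIbd
    _ = R2c * (c^(j+1)/c) := by rw [hR2d]; ring
  -- determinant estimates
  have hG1Xb := bG1 c hc1 (1+lam) hIX
  have hG2Xb := bG2 c hc1 (1+lam) hIX
  have hH1b := bH1 c hc1
  have hH2b := bH2 c hc1
  have hG1Xe := eG1 c hc1 (1+lam) hIX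
  have hG2Xe := eG2 c hc1 (1+lam) hIX
  have hH1e := eH1 c hc1
  have hH2e := eH2 c hc1
  rw [← hgXd] at hG1Xe
  rw [← hhXd] at hG2Xe
  set Δ := G1 j lam p c (1+lam) * HH2 j lam p c
      - G2 j lam p c (1+lam) * HH1 j lam p c with hΔd
  clear_value Δ
  have hΔest : |Δ - c^(2*j+1) * (gX*Hh - hXv*Gh)| ≤ Kd * (c^(2*j+1)/c) := by
    have hid : Δ - c^(2*j+1) * (gX*Hh - hXv*Gh)
        = G1 j lam p c (1+lam) * (HH2 j lam p c - c^j*Hh)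
          + (c^j*Hh) * (G1 j lam p c (1+lam) - c^(j+1)*gX)
          - G2 j lam p c (1+lam) * (HH1 j lam p c - c^(j+1)*Gh)
          - (c^(j+1)*Gh) * (G2 j lam p c (1+lam) - c^j*hXv) := by
      rw [hΔd]; ring
    rw [hid]
    have t1 : |G1 j lam p c (1+lam) * (HH2 j lam p c - c^j*Hh)|
        ≤ BG1*CH2 * (c^(2*j+1)/c) := by
      rw [abs_mul]
      calc |G1 j lam p c (1+lam)| * |HH2 j lam p c - c^j*Hh|
          ≤ (BG1*c^(j+1)) * (CH2*(c^j/c)) :=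
            mul_le_mul hG1Xb hH2e (abs_nonneg _) (by positivity)
      _ = BG1*CH2 * (c^(2*j+1)/c) := by ring
    have t2 : |(c^j*Hh) * (G1 j lam p c (1+lam) - c^(j+1)*gX)|
        ≤ |Hh| * CG1 * (c^(2*j+1)/c) := by
      rw [abs_mul, abs_mul, abs_of_pos (pow_pos hc0 j)]
      calc c^j*|Hh| * |G1 j lam p c (1+lam) - c^(j+1)*gX|
          ≤ c^j*|Hh| * (CG1 * (c^(j+1)/c)) :=
            mul_le_mul_of_nonneg_left hG1Xe (by positivity)
      _ = |Hh| * CG1 * (c^(2*j+1)/c) := by ring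
    have t3 : |G2 j lam p c (1+lam) * (HH1 j lam p c - c^(j+1)*Gh)|
        ≤ BG2*CH1 * (c^(2*j+1)/c) := by
      rw [abs_mul]
      calc |G2 j lam p c (1+lam)| * |HH1 j lam p c - c^(j+1)*Gh|
          ≤ (BG2*c^j) * (CH1*(c^(j+1)/c)) :=
            mul_le_mul hG2Xb hH1e (abs_nonneg _) (by positivity)
      _ = BG2*CH1 * (c^(2*j+1)/c) := by ring
    have t4 : |(c^(j+1)*Gh) * (G2 j lam p c (1+lam) - c^j*hXv)|
        ≤ |Gh| * CG2 * (c^(2*j+1)/c) := by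
      rw [abs_mul, abs_mul, abs_of_pos (pow_pos hc0 (j+1))]
      calc c^(j+1)*|Gh| * |G2 j lam p c (1+lam) - c^j*hXv|
          ≤ c^(j+1)*|Gh| * (CG2 * (c^j/c)) :=
            mul_le_mul_of_nonneg_left hG2Xe (by positivity)
      _ = |Gh| * CG2 * (c^(2*j+1)/c) := by ring
    calc |G1 j lam p c (1+lam) * (HH2 j lam p c - c^j*Hh)
          + (c^j*Hh) * (G1 j lam p c (1+lam) - c^(j+1)*gX)
          - G2 j lam p c (1+lam) * (HH1 j lam p c - c^(j+1)*Gh)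
          - (c^(j+1)*Gh) * (G2 j lam p c (1+lam) - c^j*hXv)|
        ≤ |G1 j lam p c (1+lam) * (HH2 j lam p c - c^j*Hh)
          + (c^j*Hh) * (G1 j lam p c (1+lam) - c^(j+1)*gX)
          - G2 j lam p c (1+lam) * (HH1 j lam p c - c^(j+1)*Gh)|
          + |(c^(j+1)*Gh) * (G2 j lam p c (1+lam) - c^j*hXv)| := abs_sub _ _
    _ ≤ (|G1 j lam p c (1+lam) * (HH2 j lam p c - c^j*Hh)
          + (c^j*Hh) * (G1 j lam p c (1+lam) - c^(j+1)*gX)|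
          + |G2 j lam p c (1+lam) * (HH1 j lam p c - c^(j+1)*Gh)|)
          + |(c^(j+1)*Gh) * (G2 j lam p c (1+lam) - c^j*hXv)| := by
        have := abs_sub (G1 j lam p c (1+lam) * (HH2 j lam p c - c^j*Hh)
          + (c^j*Hh) * (G1 j lam p c (1+lam) - c^(j+1)*gX))
          (G2 j lam p c (1+lam) * (HH1 j lam p c - c^(j+1)*Gh))
        linarith only [this]
    _ ≤ ((|G1 j lam p c (1+lam) * (HH2 j lam p c - c^j*Hh)|
          + |(c^j*Hh) * (G1 j lam p c (1+lam) - c^(j+1)*gX)|)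
          + |G2 j lam p c (1+lam) * (HH1 j lam p c - c^(j+1)*Gh)|)
          + |(c^(j+1)*Gh) * (G2 j lam p c (1+lam) - c^j*hXv)| := by
        have := abs_add_le (G1 j lam p c (1+lam) * (HH2 j lam p c - c^j*Hh))
          ((c^j*Hh) * (G1 j lam p c (1+lam) - c^(j+1)*gX))
        linarith only [this]
    _ ≤ Kd * (c^(2*j+1)/c) := by rw [hKdd]; linarith only [t1, t2, t3, t4]
  have hcp21 : (0:ℝ) < c^(2*j+1) := pow_pos hc0 _
  have hΔlow : δ0/2 * c^(2*j+1) ≤ |Δ| := by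
    have habs0 : |c^(2*j+1) * (gX*Hh - hXv*Gh)| = c^(2*j+1) * δ0 := by
      rw [abs_mul, abs_of_pos hcp21]
      have hneg : gX*Hh - hXv*Gh = -δ0 := by rw [hδ0d]; ring
      rw [hneg, abs_neg, abs_of_pos hδ0]
    have htri := abs_sub_abs_le_abs_sub (c^(2*j+1) * (gX*Hh - hXv*Gh)) Δ
    rw [habs0, abs_sub_comm] at htri
    have hsmall : Kd * (c^(2*j+1)/c) ≤ δ0/2 * c^(2*j+1) := by
      have h2 : 2*Kd ≤ c*δ0 := by
        have := (div_le_iff₀ hδ0).mp hcKd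
        linarith only [this]
      have hKdc : Kd/c ≤ δ0/2 := by
        rw [div_le_div_iff₀ hc0 (by norm_num : (0:ℝ) < 2)]
        linarith only [h2]
      calc Kd * (c^(2*j+1)/c) = (Kd/c) * c^(2*j+1) := by ring
      _ ≤ (δ0/2) * c^(2*j+1) := mul_le_mul_of_nonneg_right hKdc hcp21.le
    linarith only [htri, hΔest, hsmall]
  -- Cramer bounds for α and β
  have hαb : |α| ≤ KA / c := by
    have hidα : α * Δ = HH2 j lam p c * (α * G1 j lam p c (1+lam) - β * G2 j lam p c (1+lam))
        - G2 j lam p c (1+lam) * (α * HH1 j lam p c - β * HH2 j lam p c) := by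
      rw [hΔd]; ring
    have hαΔ : |α| * |Δ| ≤ (BH2*R1c + BG2*R2c) * (c^(2*j+1)/c) := by
      rw [← abs_mul, hidα]
      calc |HH2 j lam p c * (α * G1 j lam p c (1+lam) - β * G2 j lam p c (1+lam))
          - G2 j lam p c (1+lam) * (α * HH1 j lam p c - β * HH2 j lam p c)|
          ≤ |HH2 j lam p c * (α * G1 j lam p c (1+lam) - β * G2 j lam p c (1+lam))|
            + |G2 j lam p c (1+lam) * (α * HH1 j lam p c - β * HH2 j lam p c)| := abs_sub _ _
      _ ≤ (BH2*c^j) * (R1c*(c^(j+1)/c)) + (BG2*c^j) * (R2c*(c^(j+1)/c)) := by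
          apply add_le_add
          · rw [abs_mul]
            exact mul_le_mul hH2b hr1 (abs_nonneg _) (by positivity)
          · rw [abs_mul]
            exact mul_le_mul hG2Xb hr2 (abs_nonneg _) (by positivity)
      _ = (BH2*R1c + BG2*R2c) * (c^(2*j+1)/c) := by ring
    have step : |α| * (δ0/2*c^(2*j+1)) ≤ (BH2*R1c + BG2*R2c)*(c^(2*j+1)/c) :=
      le_trans (mul_le_mul_of_nonneg_left hΔlow (abs_nonneg α)) hαΔ
    rw [le_div_iff₀ hc0, hKAd, le_div_iff₀ hδ0]
    have hqc : c^(2*j+1)/c = c^(2*j) := by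
      rw [pow_succ, mul_div_cancel_right₀ _ (ne_of_gt hc0)]
    rw [hqc] at step
    have hcp2j : (0:ℝ) < c^(2*j) := pow_pos hc0 _
    have key : ((|α| * c)*δ0) * c^(2*j) ≤ (2*(BH2*R1c + BG2*R2c)) * c^(2*j) := by
      have e1 : ((|α| * c)*δ0) * c^(2*j) = 2 * (|α| * (δ0/2*c^(2*j+1))) := by ring
      rw [e1]
      linarith only [step]
    exact le_of_mul_le_mul_right key hcp2j
  have hβb : |β| ≤ KB := by
    have hidβ : β * Δ = HH1 j lam p c * (α * G1 j lam p c (1+lam) - β * G2 j lam p c (1+lam))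
        - G1 j lam p c (1+lam) * (α * HH1 j lam p c - β * HH2 j lam p c) := by
      rw [hΔd]; ring
    have hβΔ : |β| * |Δ| ≤ (BH1*R1c + BG1*R2c) * c^(2*j+1) := by
      rw [← abs_mul, hidβ]
      calc |HH1 j lam p c * (α * G1 j lam p c (1+lam) - β * G2 j lam p c (1+lam))
          - G1 j lam p c (1+lam) * (α * HH1 j lam p c - β * HH2 j lam p c)|
          ≤ |HH1 j lam p c * (α * G1 j lam p c (1+lam) - β * G2 j lam p c (1+lam))|
            + |G1 j lam p c (1+lam) * (α * HH1 j lam p c - β * HH2 j lam p c)| := abs_sub _ _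
      _ ≤ (BH1*c^(j+1)) * (R1c*(c^(j+1)/c)) + (BG1*c^(j+1)) * (R2c*(c^(j+1)/c)) := by
          apply add_le_add
          · rw [abs_mul]
            exact mul_le_mul hH1b hr1 (abs_nonneg _) (by positivity)
          · rw [abs_mul]
            exact mul_le_mul hG1Xb hr2 (abs_nonneg _) (by positivity)
      _ = (BH1*c^(j+1)) * (R1c*c^j) + (BG1*c^(j+1)) * (R2c*c^j) := by rw [hpow_succ]
      _ = (BH1*R1c + BG1*R2c) * c^(2*j+1) := by ring
    have step : |β| * (δ0/2*c^(2*j+1)) ≤ (BH1*R1c + BG1*R2c)*c^(2*j+1) :=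
      le_trans (mul_le_mul_of_nonneg_left hΔlow (abs_nonneg β)) hβΔ
    rw [hKBd, le_div_iff₀ hδ0]
    have key : (|β| * δ0) * c^(2*j+1) ≤ (2*(BH1*R1c + BG1*R2c)) * c^(2*j+1) := by
      have e1 : (|β| * δ0) * c^(2*j+1) = 2 * (|β| * (δ0/2*c^(2*j+1))) := by ring
      rw [e1]
      linarith only [step]
    exact le_of_mul_le_mul_right key hcp21
  -- uniform bound for V1F
  have hV1bd : ∀ y ∈ Set.Icc lam (1+lam), |V1F j lam c f y| ≤ KV * c^j := by
    intro y hy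
    rw [hsplit y hy]
    calc |-α * G1 j lam p c y + β * G2 j lam p c y + EI y|
        ≤ |-α * G1 j lam p c y + β * G2 j lam p c y| + |EI y| := abs_add_le _ _
    _ ≤ (|α| * |G1 j lam p c y| + |β| * |G2 j lam p c y|) + |EI y| := by
        have h1 := abs_add_le (-α * G1 j lam p c y) (β * G2 j lam p c y)
        rw [abs_mul, abs_mul, abs_neg] at h1
        linarith only [h1]
    _ ≤ ((KA/c) * (BG1*c^(j+1)) + KB * (BG2*c^j)) + CEI * (c^(j+1)/c) := by
        apply add_le_add (add_le_add ?_ ?_) (hEIbd y hy)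
        · exact mul_le_mul hαb (bG1 c hc1 y hy) (abs_nonneg _) (by positivity)
        · exact mul_le_mul hβb (bG2 c hc1 y hy) (abs_nonneg _) hKB0
    _ = (KA*BG1)*(c^(j+1)/c) + KB*BG2*c^j + CEI*(c^(j+1)/c) := by ring
    _ = (KA*BG1 + KB*BG2 + CEI) * c^j := by rw [hpow_succ]; ring
    _ = KV * c^j := by rw [hKVd]
  -- final estimates
  intro x hx
  have hyI : x + lam ∈ Set.Icc lam (1+lam) := ⟨by linarith only [hx.1, hlam], by linarith only [hx.2]⟩
  have hy0 : 0 < x + lam := lt_of_lt_of_le hlam hyI.1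
  have hfd : |f (x+lam) - Ff j lam c (x+lam)| ≤ Kf * c^j := by
    rw [hrep2 (x+lam) hyI]
    have hIb : |∫ t in lam..(x+lam), t^(2*j+2) * V1F j lam c f t|
        ≤ (1+lam)^(2*j+2) * (KV*c^j) := by
      apply int_abs_le hlam hyI
      intro t ht
      have ht0 : 0 < t := lt_of_lt_of_le hlam ht.1
      rw [abs_mul, abs_of_pos (pow_pos ht0 _)]
      exact mul_le_mul (pow_le_pow_left₀ ht0.le ht.2 _) (hV1bd t ht) (abs_nonneg _)
        (by positivity)
    rw [abs_mul, abs_of_pos hy0]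
    calc (x+lam) * |∫ t in lam..(x+lam), t^(2*j+2) * V1F j lam c f t|
        ≤ (1+lam) * ((1+lam)^(2*j+2) * (KV*c^j)) := by
          apply mul_le_mul hyI.2 hIb (abs_nonneg _) (by linarith only [hlam] : (0:ℝ) ≤ 1 + lam)
    _ = Kf * c^j := by rw [hKfd]; ring
  have hfd' : |deriv f (x+lam) - Ff1 j lam c (x+lam)| ≤ Kg * c^j := by
    have hiden : deriv f (x+lam) - Ff1 j lam c (x+lam)
        = V1F j lam c f (x+lam) * (x+lam)^(2*j+3) + (f (x+lam) - Ff j lam c (x+lam))/(x+lam) := by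
      rw [V1F]
      field_simp
      ring
    rw [hiden]
    calc |V1F j lam c f (x+lam) * (x+lam)^(2*j+3)
        + (f (x+lam) - Ff j lam c (x+lam))/(x+lam)|
        ≤ |V1F j lam c f (x+lam) * (x+lam)^(2*j+3)|
          + |(f (x+lam) - Ff j lam c (x+lam))/(x+lam)| := abs_add_le _ _
    _ ≤ (KV*c^j) * (1+lam)^(2*j+3) + (Kf*c^j)/lam := by
        apply add_le_add
        · rw [abs_mul, abs_of_pos (pow_pos hy0 _)]
          apply mul_le_mul (hV1bd _ hyI) (pow_le_pow_left₀ hy0.le hyI.2 _) (by positivity)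
            (by positivity)
        · rw [abs_div, abs_of_pos hy0]
          exact div_le_div₀ (by positivity) hfd hlam hyI.1
    _ = Kg * c^j := by rw [hKgd, hKfd]; ring
  have hcj0 : (0:ℝ) ≤ c^j := pow_nonneg hc0.le j
  have e1 : j+2-1 = j+1 := rfl
  have e2 : j+2-2 = j := rfl
  rw [e1, e2]
  constructor
  · have hFfy : 2*c^(j+1)*x*(1-x) = Ff j lam c (x+lam) := by unfold Ff; ring
    have hgoal : |f (x+lam) - 2*c^(j+1)*x*(1-x)| ≤ Kf * c^j := by rw [hFfy]; exact hfd
    have : Kf * c^j ≤ (Kf + Kg + 1) * c^j := by have h9 : 0 ≤ (Kg+1)*c^j := mul_nonneg (by linarith only [hKg0]) hcj0; linarith only [h9]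
    linarith only [hgoal, this]
  · have hFf1y : 2*c^(j+1)*(1-2*x) = Ff1 j lam c (x+lam) := by unfold Ff1; ring
    have hgoal : |deriv f (x+lam) - 2*c^(j+1)*(1-2*x)| ≤ Kg * c^j := by rw [hFf1y]; exact hfd'
    have : Kg * c^j ≤ (Kf + Kg + 1) * c^j := by have h9 : 0 ≤ (Kf+1)*c^j := mul_nonneg (by linarith only [hKf0]) hcj0; linarith only [h9]
    linarith only [hgoal, this]
end

section
/- Let n ≥ 2 be a natural number, m := 2n, and λ > 0 a real number. Consider the 4×4 real matrix M_inf with rows (−1/m, −λ²/(m−2), λ, λ^m), (−1/m, −(1+λ)²/(m−2), 1+λ, (1+λ)^m), (0, −λ/(n−1), 1, m·λ^(m−1)), (0, −(1+λ)/(n−1), 1, m·(1+λ)^(m−1)). Then M_inf is invertible, and the unique solution x ∈ ℝ⁴ of the linear system M_inf · x = (0, 0, 2, −2)ᵀ is x = (2·m·λ·(1+λ), 2·(m−2), 2·(1+2λ), 0). -/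
set_option maxHeartbeats 1600000

open Matrix


private lemma det_fin_four' (a b c d e f g h i j k l p q r s : ℝ) :
    (Matrix.of ![![a,b,c,d],![e,f,g,h],![i,j,k,l],![p,q,r,s]]).det =
      a * (f * (k * s - l * r) - g * (j * s - l * q) + h * (j * r - k * q))
      - b * (e * (k * s - l * r) - g * (i * s - l * p) + h * (i * r - k * p))
      + c * (e * (j * s - l * q) - f * (i * s - l * p) + h * (i * q - j * p))
      - d * (e * (j * r - k * q) - f * (i * r - k * p) + g * (i * q - j * p)) := by
  simp [Matrix.det_succ_row_zero, Fin.sum_univ_succ, Matrix.det_fin_three,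
    Fin.succAbove]
  ring

/-- The leading-order (`c → ∞`) coefficient matrix `M_∞` of the linear system determining
the boundary value problem on ruled manifolds is invertible, and the unique solution
of `M_∞ · x = (0,0,2,-2)ᵀ` is `x = (2mλ(1+λ), 2(m-2), 2(1+2λ), 0)`, where `m = 2n`. -/
theorem limit_matrix_invertible_and_solution
    (n : ℕ) (hn : 2 ≤ n) (lam : ℝ) (hlam : 0 < lam) :
    let m : ℕ := 2 * n
    let M_inf : Matrix (Fin 4) (Fin 4) ℝ :=
      Matrix.of
        ![![-1 / (m : ℝ), -lam ^ 2 / ((m : ℝ) - 2), lam, lam ^ m],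
          ![-1 / (m : ℝ), -(1 + lam) ^ 2 / ((m : ℝ) - 2), 1 + lam, (1 + lam) ^ m],
          ![0, -lam / ((n : ℝ) - 1), 1, (m : ℝ) * lam ^ (m - 1)],
          ![0, -(1 + lam) / ((n : ℝ) - 1), 1, (m : ℝ) * (1 + lam) ^ (m - 1)]]
    IsUnit M_inf ∧
      ∀ x : Fin 4 → ℝ,
        M_inf *ᵥ x = ![0, 0, 2, -2] ↔
          x = ![2 * (m : ℝ) * lam * (1 + lam), 2 * ((m : ℝ) - 2), 2 * (1 + 2 * lam), 0] := by
  intro m M_inf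
  have hmdef : m = 2 * n := rfl
  have hm4 : 4 ≤ m := by omega
  have hnR : (2:ℝ) ≤ (n:ℝ) := by exact_mod_cast hn
  have hmR : (m:ℝ) = 2 * (n:ℝ) := by rw [hmdef]; push_cast; ring
  have hm0 : (m:ℝ) ≠ 0 := by rw [hmR]; nlinarith
  have hm2 : (m:ℝ) - 2 ≠ 0 := by rw [hmR]; nlinarith
  have hn1 : (n:ℝ) - 1 ≠ 0 := by nlinarith
  set a : ℝ := lam with ha
  set b : ℝ := 1 + lam with hb
  have hab : a < b := by rw [ha, hb]; linarith
  have ha0 : 0 < a := hlam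
  -- numerator of the determinant
  have hS1 : ∑ i ∈ Finset.range m, b ^ i * a ^ (m - 1 - i) = b ^ m - a ^ m := by
    have h := geom_sum₂_mul b a m
    rw [show b - a = 1 by rw [ha, hb]; ring, mul_one] at h
    exact h
  have hS2 : ∑ i ∈ Finset.range m, a ^ i * b ^ (m - 1 - i) = b ^ m - a ^ m := by
    have h := geom_sum₂_mul a b m
    rw [show a - b = -1 by rw [ha, hb]; ring] at h
    linarith
  have key : ∀ i ∈ Finset.range m,
      (b ^ i - a ^ i) * (b ^ (m - 1 - i) - a ^ (m - 1 - i)) =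
        a ^ (m - 1) + b ^ (m - 1) - (b ^ i * a ^ (m - 1 - i) + a ^ i * b ^ (m - 1 - i)) := by
    intro i hi
    have hilt : i + (m - 1 - i) = m - 1 := by
      have := Finset.mem_range.mp hi; omega
    have h1 : a ^ (m - 1) = a ^ i * a ^ (m - 1 - i) := by rw [← pow_add, hilt]
    have h2 : b ^ (m - 1) = b ^ i * b ^ (m - 1 - i) := by rw [← pow_add, hilt]
    rw [h1, h2]; ring
  have hsum : ∑ i ∈ Finset.range m, (b ^ i - a ^ i) * (b ^ (m - 1 - i) - a ^ (m - 1 - i)) =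
      (m:ℝ) * a ^ (m - 1) + (m:ℝ) * b ^ (m - 1) + 2 * a ^ m - 2 * b ^ m := by
    rw [Finset.sum_congr rfl key]
    simp only [Finset.sum_sub_distrib, Finset.sum_add_distrib, hS1, hS2, Finset.sum_const,
      Finset.card_range, nsmul_eq_mul]
    ring
  have hEpos : 0 < (m:ℝ) * a ^ (m - 1) + (m:ℝ) * b ^ (m - 1) + 2 * a ^ m - 2 * b ^ m := by
    rw [← hsum]
    apply Finset.sum_pos'
    · intro i _
      have h1 : a ^ i ≤ b ^ i := pow_le_pow_left₀ ha0.le hab.le i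
      have h2 : a ^ (m - 1 - i) ≤ b ^ (m - 1 - i) := pow_le_pow_left₀ ha0.le hab.le _
      exact mul_nonneg (by linarith) (by linarith)
    · refine ⟨1, Finset.mem_range.mpr (by omega), ?_⟩
      have h1 : a ^ 1 < b ^ 1 := by simpa using hab
      have h2 : a ^ (m - 1 - 1) < b ^ (m - 1 - 1) := by
        apply pow_lt_pow_left₀ hab ha0.le
        omega
      exact mul_pos (by linarith) (by linarith)
  -- determinant
  have hpa : a ^ m = a ^ (m - 1) * a := by
    rw [← pow_succ]; congr 1; omega
  have hpb : b ^ m = b ^ (m - 1) * b := by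
    rw [← pow_succ]; congr 1; omega
  have hdet : M_inf.det =
      ((m:ℝ) * a ^ (m - 1) + (m:ℝ) * b ^ (m - 1) + 2 * a ^ m - 2 * b ^ m) /
        (2 * ((n:ℝ) - 1) * (m:ℝ)) := by
    have hm2' : (m:ℝ) - 2 = 2 * ((n:ℝ) - 1) := by rw [hmR]; ring
    simp only [M_inf]
    rw [det_fin_four']
    rw [hpa, hpb, hm2']
    field_simp
    ring
  have hdet0 : M_inf.det ≠ 0 := by
    rw [hdet]
    apply div_ne_zero (ne_of_gt hEpos)
    intro h
    have : (n:ℝ) - 1 = 0 ∨ (m:ℝ) = 0 := by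
      rcases mul_eq_zero.mp h with h' | h'
      · left; rcases mul_eq_zero.mp h' with h'' | h''
        · norm_num at h''
        · exact h''
      · right; exact h'
    tauto
  have hU : IsUnit M_inf := (Matrix.isUnit_iff_isUnit_det _).mpr (isUnit_iff_ne_zero.mpr hdet0)
  refine ⟨hU, fun x => ?_⟩
  have hx0 : M_inf *ᵥ ![2 * (m : ℝ) * lam * (1 + lam), 2 * ((m : ℝ) - 2), 2 * (1 + 2 * lam), 0]
      = ![0, 0, 2, -2] := by
    have hm2' : (m:ℝ) - 2 = 2 * ((n:ℝ) - 1) := by rw [hmR]; ring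
    funext i
    fin_cases i <;>
      simp [M_inf, Matrix.mulVec, dotProduct, Fin.sum_univ_four, hm2'] <;>
      field_simp <;> ring
  constructor
  · intro h
    exact Matrix.mulVec_injective_iff_isUnit.mpr hU (h.trans hx0.symm)
  · rintro rfl
    exact hx0
end

section
/- Let n be a positive integer, let a : Fin n → ℝ and a₀ ∈ ℝ, let U ⊆ ℝⁿ be an open set on which the affine function u(z) := (∑_i a i · z i) + a₀ is strictly positive, and let H : U → Matrix (Fin n) (Fin n) ℝ be twice continuously differentiable with H(z) symmetric (H(z) i j = H(z) j i) for all z ∈ U. Then at every point of U one has ∑_{i,j} ∂_i ∂_j (u⁻¹ · H i j) = u⁻¹ · ∑_{i,j} ∂_i ∂_j (H i j) − 2·u⁻² · ∑_{i,j} a i · ∂_j (H i j) + 2·u⁻³ · ∑_{i,j} a i · a j · H i j, where ∂_k denotes the partial derivative in the k-th coordinate direction of ℝⁿ and u⁻¹ · H i j denotes the pointwise function z ↦ H(z) i j / u(z). -/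
open scoped BigOperators

/-- The partial derivative of a function `g : ℝⁿ → ℝ` in the `k`-th coordinate
direction. -/
noncomputable def pd {n : ℕ} (k : Fin n) (g : (Fin n → ℝ) → ℝ) : (Fin n → ℝ) → ℝ :=
  fun z => fderiv ℝ g z (Pi.single k 1)

lemma key_second_partial
    {n : ℕ} (a : Fin n → ℝ) (a₀ : ℝ)
    {U : Set (Fin n → ℝ)} (hU : IsOpen U)
    {u : (Fin n → ℝ) → ℝ} (hu : u = fun z => (∑ i, a i * z i) + a₀)
    (hupos : ∀ z ∈ U, 0 < u z)
    {h : (Fin n → ℝ) → ℝ} (hh : ContDiffOn ℝ 2 h U)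
    (i j : Fin n) {z : Fin n → ℝ} (hz : z ∈ U) :
    pd i (pd j (fun w => h w / u w)) z
      = (u z)⁻¹ * pd i (pd j h) z
        - ((u z)⁻¹) ^ 2 * (a i * pd j h z + a j * pd i h z)
        + 2 * ((u z)⁻¹) ^ 3 * (a i * a j * h z) := by
  classical
  set L : (Fin n → ℝ) →L[ℝ] ℝ := ∑ k, a k • ContinuousLinearMap.proj k with hLdef
  have hL : ∀ w, HasFDerivAt u L w := by
    intro w
    rw [hu]
    have hk : ∀ k : Fin n, HasFDerivAt (fun z : Fin n → ℝ => a k * z k)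
        (a k • ContinuousLinearMap.proj k) w := fun k =>
      ((ContinuousLinearMap.proj (R := ℝ) (φ := fun _ : Fin n => ℝ)
        k).hasFDerivAt (x := w)).const_mul (a k)
    exact (HasFDerivAt.fun_sum fun k _ => hk k).add_const a₀
  have hLe : ∀ k : Fin n, L (Pi.single k 1) = a k := by
    intro k
    simp [hLdef, Pi.single_apply, mul_ite, Finset.sum_ite_eq']
  have hne : ∀ w ∈ U, u w ≠ 0 := fun w hw => (hupos w hw).ne'
  have hdiff : ∀ w ∈ U, DifferentiableAt ℝ h w := fun w hw =>
    ((hh.contDiffAt (hU.mem_nhds hw)).differentiableAt (by norm_num))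
  -- differentiability of pd j h at z
  have hgd : DifferentiableAt ℝ (pd j h) z := by
    have h2 : ContDiffAt ℝ 2 h z := hh.contDiffAt (hU.mem_nhds hz)
    have h1 : ContDiffAt ℝ 1 (fderiv ℝ h) z := h2.fderiv_right (by norm_num)
    have := (ContinuousLinearMap.apply ℝ ℝ (Pi.single j 1)).differentiable.differentiableAt.comp z
      (h1.differentiableAt one_ne_zero)
    exact this
  set F : (Fin n → ℝ) → ℝ := fun w => (u w)⁻¹ * pd j h w - h w * (((u w) ^ 2)⁻¹ * a j) with hFdef
  have hstep : ∀ w ∈ U, pd j (fun y => h y / u y) w = F w := by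
    intro w hw
    have hv : HasFDerivAt (fun y => (u y)⁻¹) ((-((u w) ^ 2)⁻¹) • L) w :=
      (hasDerivAt_inv (hne w hw)).comp_hasFDerivAt w (hL w)
    have hm : HasFDerivAt (fun y => h y * (u y)⁻¹)
        (h w • ((-((u w) ^ 2)⁻¹) • L) + (u w)⁻¹ • fderiv ℝ h w) w :=
      (hdiff w hw).hasFDerivAt.mul hv
    have hdivmul : (fun y => h y / u y) = fun y => h y * (u y)⁻¹ := by
      funext y; rw [div_eq_mul_inv]
    show fderiv ℝ (fun y => h y / u y) w (Pi.single j 1) = F w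
    rw [hdivmul, hm.fderiv]
    simp [hFdef, hLe, pd]
    ring
  have heq : pd i (pd j (fun y => h y / u y)) z = pd i F z := by
    show fderiv ℝ (pd j fun y => h y / u y) z (Pi.single i 1) = fderiv ℝ F z (Pi.single i 1)
    rw [Filter.EventuallyEq.fderiv_eq (Filter.eventuallyEq_of_mem (hU.mem_nhds hz) hstep)]
  rw [heq]
  -- now compute pd i F z
  have hv : HasFDerivAt (fun y => (u y)⁻¹) ((-((u z) ^ 2)⁻¹) • L) z :=
    (hasDerivAt_inv (hne z hz)).comp_hasFDerivAt z (hL z)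
  have hq : HasFDerivAt (fun y => ((u y) ^ 2)⁻¹)
      ((-((2 : ℕ) * u z ^ 1) / ((u z) ^ 2) ^ 2) • L) z :=
    (((hasDerivAt_pow 2 (u z)).inv (pow_ne_zero 2 (hne z hz)))).comp_hasFDerivAt z (hL z)
  have hg : HasFDerivAt (pd j h) (fderiv ℝ (pd j h) z) z := hgd.hasFDerivAt
  have h1 : HasFDerivAt (fun w => (u w)⁻¹ * pd j h w)
      ((u z)⁻¹ • fderiv ℝ (pd j h) z + pd j h z • ((-((u z) ^ 2)⁻¹) • L)) z := hv.mul hg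
  have h2 : HasFDerivAt (fun w => h w * (((u w) ^ 2)⁻¹ * a j))
      (h z • (a j • ((-((2 : ℕ) * u z ^ 1) / ((u z) ^ 2) ^ 2) • L))
        + (((u z) ^ 2)⁻¹ * a j) • fderiv ℝ h z) z :=
    (hdiff z hz).hasFDerivAt.mul (hq.mul_const (a j))
  have hF := h1.fun_sub h2
  show fderiv ℝ F z (Pi.single i 1) = _
  rw [hF.fderiv]
  have e1 : pd i (pd j h) z = fderiv ℝ (pd j h) z (Pi.single i 1) := rfl
  have e2 : pd i h z = fderiv ℝ h z (Pi.single i 1) := rfl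
  simp only [ContinuousLinearMap.coe_sub', Pi.sub_apply, ContinuousLinearMap.add_apply,
    ContinuousLinearMap.coe_smul', Pi.smul_apply, smul_eq_mul, hLe, e1, e2]
  rw [← e1, ← e2]
  have hz0 : u z ≠ 0 := hne z hz
  field_simp
  ring

/-- The divergence-form identity for the conformal change of the Hermitian scalar curvature
on a toric almost Kähler manifold: for a positive affine function `u` and a symmetric `C²`
matrix-valued function `H` on an open set `U ⊆ ℝⁿ`,
`∑ᵢⱼ ∂ᵢ∂ⱼ(u⁻¹ Hᵢⱼ) = u⁻¹ ∑ᵢⱼ ∂ᵢ∂ⱼ Hᵢⱼ - 2u⁻² ∑ᵢⱼ aᵢ ∂ⱼ Hᵢⱼ + 2u⁻³ ∑ᵢⱼ aᵢ aⱼ Hᵢⱼ` on `U`. -/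
theorem toric_divergence_form_identity
    (n : ℕ) (hn : 0 < n) (a : Fin n → ℝ) (a₀ : ℝ)
    (U : Set (Fin n → ℝ)) (hU : IsOpen U)
    (u : (Fin n → ℝ) → ℝ) (hu : u = fun z => (∑ i, a i * z i) + a₀)
    (hupos : ∀ z ∈ U, 0 < u z)
    (H : (Fin n → ℝ) → Matrix (Fin n) (Fin n) ℝ)
    (hH : ∀ i j : Fin n, ContDiffOn ℝ 2 (fun z => H z i j) U)
    (hsymm : ∀ z ∈ U, ∀ i j : Fin n, H z i j = H z j i) :
    ∀ z ∈ U,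
      ∑ i, ∑ j, pd i (pd j (fun w => H w i j / u w)) z
        = (u z)⁻¹ * ∑ i, ∑ j, pd i (pd j (fun w => H w i j)) z
          - 2 * ((u z)⁻¹) ^ 2 * ∑ i, ∑ j, a i * pd j (fun w => H w i j) z
          + 2 * ((u z)⁻¹) ^ 3 * ∑ i, ∑ j, a i * a j * H z i j := by
  intro z hz
  have key : ∀ i j : Fin n,
      pd i (pd j (fun w => H w i j / u w)) z
        = (u z)⁻¹ * pd i (pd j (fun w => H w i j)) z
          - ((u z)⁻¹) ^ 2 * (a i * pd j (fun w => H w i j) z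
              + a j * pd i (fun w => H w i j) z)
          + 2 * ((u z)⁻¹) ^ 3 * (a i * a j * H z i j) := fun i j =>
    key_second_partial a a₀ hU hu hupos (hH i j) i j hz
  have swap : ∑ i, ∑ j, a j * pd i (fun w => H w i j) z
      = ∑ i, ∑ j, a i * pd j (fun w => H w i j) z := by
    rw [Finset.sum_comm]
    refine Finset.sum_congr rfl fun i _ => Finset.sum_congr rfl fun j _ => ?_
    congr 1
    show fderiv ℝ (fun w => H w j i) z (Pi.single j 1)
      = fderiv ℝ (fun w => H w i j) z (Pi.single j 1)
    rw [Filter.EventuallyEq.fderiv_eq (Filter.eventuallyEq_of_mem (hU.mem_nhds hz)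
      (fun w hw => hsymm w hw j i))]
  have e1 : ∑ i, ∑ j, pd i (pd j (fun w => H w i j / u w)) z
      = (u z)⁻¹ * (∑ i, ∑ j, pd i (pd j (fun w => H w i j)) z)
        - ((u z)⁻¹) ^ 2 * ((∑ i, ∑ j, a i * pd j (fun w => H w i j) z)
            + (∑ i, ∑ j, a j * pd i (fun w => H w i j) z))
        + 2 * ((u z)⁻¹) ^ 3 * (∑ i, ∑ j, a i * a j * H z i j) := by
    simp only [Finset.mul_sum, mul_add, ← Finset.sum_add_distrib, ← Finset.sum_sub_distrib]
    exact Finset.sum_congr rfl fun i _ => Finset.sum_congr rfl fun j _ => by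
      rw [key i j]; ring
  rw [e1, swap]
  ring
end
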